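/- arXiv:1406.6029 — 8 statements merged into one kernel-verified Lean document; each statement's English description precedes it below -/
import Mathlib

section
/- If n = ∑_{j=1}^t 2^{k_j} with k_1 > k_2 > ... > k_t ≥ 0, then ∑_{m=0}^{n-1} H(m) = ∑_{j=1}^t (k_j·2^{k_j-1} + (j-1)·2^{k_j}). -/
/-- Hamming weight: number of ones in the binary expansion. -/
def hammingWeight (k : ℕ) : ℕ := (Nat.digits 2 k).sum

lemma hammingWeight_eq (m : ℕ) (hm : m ≠ 0) :
    hammingWeight m = m % 2 + hammingWeight (m / 2) := by
  unfold hammingWeight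
  rw [Nat.digits_def' (by norm_num) (Nat.pos_of_ne_zero hm)]
  simp

lemma hammingWeight_pow_add (k : ℕ) : ∀ m < 2 ^ k,
    hammingWeight (2 ^ k + m) = 1 + hammingWeight m := by
  induction k with
  | zero =>
    intro m hm
    interval_cases m
    simp [hammingWeight]
  | succ k ih =>
    intro m hm
    have h1 : 2 ^ (k + 1) + m ≠ 0 := by positivity
    rw [hammingWeight_eq _ h1]
    have h2 : (2 ^ (k + 1) + m) % 2 = m % 2 := by
      omega
    have h3 : (2 ^ (k + 1) + m) / 2 = 2 ^ k + m / 2 := by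
      omega
    have h4 : m / 2 < 2 ^ k := by
      omega
    rw [h2, h3, ih _ h4]
    rcases eq_or_ne m 0 with rfl | hm0
    · simp [hammingWeight]
    · rw [hammingWeight_eq m hm0]; omega

lemma sum_hammingWeight_pow (k : ℕ) :
    ∑ m ∈ Finset.range (2 ^ k), hammingWeight m = k * 2 ^ (k - 1) := by
  induction k with
  | zero => simp [hammingWeight]
  | succ k ih =>
    have : (2 : ℕ) ^ (k + 1) = 2 ^ k + 2 ^ k := by ring
    rw [this, Finset.sum_range_add, ih]
    have h2 : ∑ m ∈ Finset.range (2 ^ k), hammingWeight (2 ^ k + m)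
        = ∑ m ∈ Finset.range (2 ^ k), (1 + hammingWeight m) := by
      apply Finset.sum_congr rfl
      intro m hm
      exact hammingWeight_pow_add k m (Finset.mem_range.mp hm)
    rw [h2, Finset.sum_add_distrib, ih]
    simp only [Finset.sum_const, Finset.card_range, smul_eq_mul, mul_one]
    rcases Nat.eq_zero_or_pos k with rfl | hk
    · simp
    · have h5 : k - 1 + 1 = k := by omega
      have hpow : 2 ^ (k - 1) * 2 = 2 ^ k := by
        rw [← pow_succ, h5]
      rw [show k + 1 - 1 = k from rfl, ← hpow]
      ring

lemma sum_two_pow_range (N : ℕ) : ∑ i ∈ Finset.range N, 2 ^ i = 2 ^ N - 1 := by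
  induction N with
  | zero => simp
  | succ N ih =>
    rw [Finset.sum_range_succ, ih]
    have : 1 ≤ 2 ^ N := Nat.one_le_two_pow
    rw [pow_succ]
    omega

lemma sum_pow_lt {t : ℕ} (k : Fin t → ℕ) (hk : StrictAnti k) (N : ℕ)
    (hN : ∀ j, k j < N) : ∑ j : Fin t, 2 ^ k j < 2 ^ N := by
  have hinj : Function.Injective k := hk.injective
  have h1 : ∑ j : Fin t, 2 ^ k j = ∑ i ∈ Finset.univ.image k, 2 ^ i :=
    (Finset.sum_image (fun a _ b _ h => hinj h)).symm
  have h2 : Finset.univ.image k ⊆ Finset.range N := by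
    intro i hi
    simp only [Finset.mem_image] at hi
    obtain ⟨j, _, rfl⟩ := hi
    exact Finset.mem_range.mpr (hN j)
  calc ∑ j : Fin t, 2 ^ k j ≤ ∑ i ∈ Finset.range N, 2 ^ i := by
        rw [h1]; exact Finset.sum_le_sum_of_subset h2
    _ = 2 ^ N - 1 := sum_two_pow_range N
    _ < 2 ^ N := by have : 1 ≤ 2 ^ N := Nat.one_le_two_pow; omega

theorem sum_hammingWeight_of_binary_expansion (t : ℕ) (k : Fin t → ℕ)
    (hk : StrictAnti k) (n : ℕ) (hn : n = ∑ j : Fin t, 2 ^ k j) :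
    ∑ m ∈ Finset.range n, hammingWeight m =
      ∑ j : Fin t, (k j * 2 ^ (k j - 1) + (j : ℕ) * 2 ^ k j) := by
  induction t generalizing n with
  | zero => simp at hn; simp [hn]
  | succ t ih =>
    set k' : Fin t → ℕ := fun j => k j.succ with hk'
    have hk'anti : StrictAnti k' := fun a b hab => hk (Fin.succ_lt_succ_iff.mpr hab)
    set n' : ℕ := ∑ j : Fin t, 2 ^ k' j with hn'
    have hnsplit : n = 2 ^ k 0 + n' := by
      rw [hn, Fin.sum_univ_succ]
    have hlt : n' < 2 ^ k 0 := by
      apply sum_pow_lt k' hk'anti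
      intro j
      exact hk (Fin.succ_pos j)
    have ihh := ih k' hk'anti n' rfl
    rw [hnsplit, Finset.sum_range_add]
    have hsum2 : ∑ m ∈ Finset.range n', hammingWeight (2 ^ k 0 + m)
        = ∑ m ∈ Finset.range n', (1 + hammingWeight m) := by
      apply Finset.sum_congr rfl
      intro m hm
      exact hammingWeight_pow_add (k 0) m (lt_trans (Finset.mem_range.mp hm) hlt)
    rw [hsum2, Finset.sum_add_distrib, ihh, sum_hammingWeight_pow]
    simp only [Finset.sum_const, Finset.card_range, smul_eq_mul, mul_one]
    rw [Fin.sum_univ_succ]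
    simp only [Fin.val_zero, zero_mul, add_zero, Fin.val_succ]
    have : ∑ j : Fin t, (k' j * 2 ^ (k' j - 1) + ((j : ℕ) + 1) * 2 ^ k' j)
        = ∑ j : Fin t, (k' j * 2 ^ (k' j - 1) + (j : ℕ) * 2 ^ k' j)
          + ∑ j : Fin t, 2 ^ k' j := by
      rw [← Finset.sum_add_distrib]
      apply Finset.sum_congr rfl
      intro j _
      ring
    rw [this, ← hn']
    omega
end

section
/- Let V_n ⊆ {0,1}^d be the set of binary expansions of the integers 0 through n-1 (for n ≤ 2^d), with two vertices adjacent iff their Hamming distance is 1. The number of edges of the induced subgraph on V_n equals ∑_{k=0}^{n-1} H(k), where H is the Hamming weight. -/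
def binVec (d k : ℕ) : Fin d → Bool := fun i => k.testBit i

lemma testBit_high {d a : ℕ} (ha : a < 2^d) {j : ℕ} (hj : d ≤ j) : a.testBit j = false :=
  Nat.testBit_lt_two_pow (lt_of_lt_of_le ha (Nat.pow_le_pow_right (by norm_num) hj))

lemma weight_eq (d : ℕ) : ∀ k < 2^d, hammingWeight k = ((Finset.range d).filter (fun i => k.testBit i)).card := by
  induction d with
  | zero => intro k hk; interval_cases k; simp [hammingWeight]
  | succ d ih =>
    intro k hk
    rcases Nat.eq_zero_or_pos k with rfl | hk0
    · simp [hammingWeight]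
    have hdig : hammingWeight k = k % 2 + hammingWeight (k / 2) := by
      unfold hammingWeight
      rw [Nat.digits_def' (by norm_num : 1 < 2) hk0]
      simp
    rw [hdig, Finset.card_filter, Finset.sum_range_succ']
    have h1 : ∀ i, (if k.testBit (i+1) then 1 else 0) = if (k/2).testBit i then 1 else 0 := by
      intro i; rw [Nat.testBit_succ]
    simp only [h1]
    rw [← Finset.card_filter, ← ih (k/2) (by omega)]
    have h0 : (if k.testBit 0 then 1 else 0) = k % 2 := by
      rw [Nat.testBit_zero]
      rcases Nat.mod_two_eq_zero_or_one k with h | h <;> simp [h]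
    rw [h0]; omega

lemma xor_lt {b i : ℕ} (h : b.testBit i = true) : b ^^^ 2^i < b := by
  apply Nat.lt_of_testBit i
  · simp [Nat.testBit_xor, h, Nat.testBit_two_pow]
  · exact h
  · intro j hj
    simp [Nat.testBit_xor, Nat.testBit_two_pow_of_ne (by omega : i ≠ j)]

lemma count_eq (d n b : ℕ) (hn : n ≤ 2^d) (hb : b < n) :
    ((Finset.range n).filter
      (fun a => a < b ∧ hammingDist (binVec d a) (binVec d b) = 1)).card
    = ((Finset.range d).filter (fun i => b.testBit i)).card := by
  have hb2 : b < 2^d := lt_of_lt_of_le hb hn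
  rw [show ((Finset.range n).filter
      (fun a => a < b ∧ hammingDist (binVec d a) (binVec d b) = 1))
    = ((Finset.range d).filter (fun i => b.testBit i)).image (fun i => b ^^^ 2^i) from ?_]
  · apply Finset.card_image_of_injOn
    intro i _ j _ hij
    have : (2:ℕ)^i = 2^j := by
      have := congrArg (fun x => b ^^^ x) hij
      simpa [Nat.xor_assoc] using this
    exact Nat.pow_right_injective (le_refl 2) this
  · ext a
    simp only [Finset.mem_filter, Finset.mem_range, Finset.mem_image]
    constructor
    · rintro ⟨han, hab, hdist⟩
      have ha2 : a < 2^d := lt_trans hab hb2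
      -- the differing coordinate
      rw [hammingDist, Finset.card_eq_one] at hdist
      obtain ⟨j0, hj0⟩ := hdist
      have hmem : ∀ j : Fin d, (binVec d a j ≠ binVec d b j) ↔ j = j0 := by
        intro j
        constructor
        · intro h
          have : j ∈ ({j0} : Finset (Fin d)) := by
            rw [← hj0]; simp [h]
          simpa using this
        · rintro rfl
          have hjm : j ∈ Finset.filter (fun i => binVec d a i ≠ binVec d b i) Finset.univ := by
            rw [hj0]; exact Finset.mem_singleton_self j
          simpa using hjm
      -- a ^^^ b = 2 ^ j0
      have hx : a ^^^ b = 2 ^ (j0 : ℕ) := by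
        apply Nat.eq_of_testBit_eq
        intro m
        rcases lt_or_ge m d with hm | hm
        · rw [Nat.testBit_xor, Nat.testBit_two_pow]
          by_cases hmj : m = (j0 : ℕ)
          · have := (hmem ⟨m, hm⟩).mpr (by ext; simpa using hmj)
            simp only [binVec, ne_eq] at this
            rcases Bool.eq_false_or_eq_true (a.testBit m) with h1 | h1 <;>
              rcases Bool.eq_false_or_eq_true (b.testBit m) with h2 | h2 <;>
                simp_all
          · have : ¬ ((⟨m, hm⟩ : Fin d) = j0) := by
              intro h; exact hmj (by simpa using congrArg Fin.val h)
            have heq := (hmem ⟨m, hm⟩)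
            simp only [binVec, ne_eq] at heq
            have : a.testBit m = b.testBit m := by
              by_contra hne
              exact this (heq.mp hne)
            simp [this, hmj, Ne.symm hmj]
        · rw [Nat.testBit_xor, testBit_high ha2 hm, testBit_high hb2 hm,
            Nat.testBit_two_pow_of_ne (by omega : (j0:ℕ) ≠ m)]
          rfl
      have hbj : b.testBit (j0 : ℕ) = true := by
        by_contra hf
        have hbf : b.testBit (j0:ℕ) = false := by simpa using hf
        have haj : a.testBit (j0 : ℕ) = true := by
          have h := (hmem j0).mpr rfl
          simp only [binVec, ne_eq] at h
          simpa [hbf] using h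
        have : b < a := by
          apply Nat.lt_of_testBit (j0 : ℕ) hbf haj
          intro j hj
          rcases lt_or_ge j d with hjd | hjd
          · have heq := hmem ⟨j, hjd⟩
            simp only [binVec, ne_eq] at heq
            by_contra hne
            have := heq.mp (fun h => hne h.symm)
            have : j = (j0 : ℕ) := by simpa using congrArg Fin.val this
            omega
          · rw [testBit_high ha2 hjd, testBit_high hb2 hjd]
        omega
      refine ⟨(j0 : ℕ), ⟨j0.isLt, hbj⟩, ?_⟩
      have : b ^^^ (a ^^^ b) = a := by
        rw [Nat.xor_comm a b, ← Nat.xor_assoc]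
        simp
      rw [← hx, this]
    · rintro ⟨i, ⟨hid, hbi⟩, rfl⟩
      have hlt : b ^^^ 2^i < b := xor_lt hbi
      refine ⟨lt_trans hlt hb, hlt, ?_⟩
      rw [hammingDist]
      rw [show ({j | binVec d (b ^^^ 2^i) j ≠ binVec d b j} : Finset (Fin d))
          = {⟨i, hid⟩} from ?_]
      · simp
      · ext j
        simp only [Finset.mem_filter, Finset.mem_singleton, Finset.mem_univ, true_and,
          binVec, ne_eq, Nat.testBit_xor]
        constructor
        · intro h
          by_contra hne
          have : (j : ℕ) ≠ i := fun he => hne (by ext; simpa using he)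
          rw [Nat.testBit_two_pow_of_ne (Ne.symm this)] at h
          simp at h
        · rintro rfl
          simp [Nat.testBit_two_pow]

theorem edges_of_initial_segment (d n : ℕ) (hn : n ≤ 2 ^ d) :
    (Finset.filter
        (fun p : ℕ × ℕ => p.1 < p.2 ∧ hammingDist (binVec d p.1) (binVec d p.2) = 1)
        (Finset.range n ×ˢ Finset.range n)).card
      = ∑ k ∈ Finset.range n, hammingWeight k := by
  rw [Finset.card_filter, Finset.sum_product, Finset.sum_comm]
  apply Finset.sum_congr rfl
  intro b hb
  rw [Finset.mem_range] at hb
  have hcf : ∑ a ∈ Finset.range n,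
      (if a < b ∧ hammingDist (binVec d a) (binVec d b) = 1 then 1 else 0)
      = ((Finset.range n).filter
          (fun a => a < b ∧ hammingDist (binVec d a) (binVec d b) = 1)).card :=
    (Finset.card_filter _ _).symm
  simp only at hcf ⊢
  rw [hcf, count_eq d n b hn hb, ← weight_eq d b (lt_of_lt_of_le hb hn)]
end

section
/- For any n ≤ 2^d and any n-element subset V of {0,1}^d, the number of edges of the induced subgraph of the hypercube graph on V is at most the number of edges induced on the set V_n of binary expansions of 0 through n-1, which is ∑_{k=0}^{n-1} H(k). -/
set_option linter.unreachableTactic false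
set_option linter.unnecessarySeqFocus false
set_option linter.unusedTactic false

def fS (n : ℕ) : ℕ := ∑ k ∈ Finset.range n, hammingWeight k

lemma H_even (k : ℕ) : hammingWeight (2*k) = hammingWeight k := by
  rcases Nat.eq_zero_or_pos k with h | h
  · simp [h]
  · unfold hammingWeight
    rw [Nat.digits_def' (by norm_num) (by omega)]
    simp [Nat.mul_div_cancel_left _ (by norm_num : 0 < 2), Nat.mul_mod_right]

lemma H_odd (k : ℕ) : hammingWeight (2*k+1) = hammingWeight k + 1 := by
  unfold hammingWeight
  rw [Nat.digits_def' (by norm_num) (by omega)]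
  have h1 : (2*k+1) % 2 = 1 := by omega
  have h2 : (2*k+1) / 2 = k := by omega
  rw [h1, h2]; simp [Nat.add_comm]

lemma fS_succ (n : ℕ) : fS (n+1) = fS n + hammingWeight n := Finset.sum_range_succ _ _

lemma fS_even (m : ℕ) : fS (2*m) = 2 * fS m + m := by
  induction m with
  | zero => simp [fS]
  | succ m ih =>
    have h1 : 2*(m+1) = 2*m+1+1 := by ring
    rw [h1, fS_succ, fS_succ, ih, H_even, H_odd, fS_succ]
    ring

lemma fS_odd (m : ℕ) : fS (2*m+1) = fS m + fS (m+1) + m := by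
  rw [fS_succ, fS_even, H_even, fS_succ]; ring

lemma fS_key : ∀ n a b, a + b = n → fS a + fS b + min a b ≤ fS (a+b) := by
  intro n
  induction n using Nat.strong_induction_on with
  | _ n ih =>
    intro a b hab
    rcases Nat.eq_zero_or_pos a with ha | ha
    · simp [ha, fS]
    rcases Nat.eq_zero_or_pos b with hb | hb
    · simp [hb, fS]
    obtain ⟨a', ha'⟩ : ∃ a', a = 2*a' ∨ a = 2*a'+1 := ⟨a/2, by omega⟩
    obtain ⟨b', hb'⟩ : ∃ b', b = 2*b' ∨ b = 2*b'+1 := ⟨b/2, by omega⟩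
    rcases ha' with ha' | ha' <;> rcases hb' with hb' | hb' <;> subst ha' hb'
    · have h1 := ih (a'+b') (by omega) a' b' rfl
      have e1 := fS_even a'
      have e2 := fS_even b'
      have e3 : fS (2*a'+2*b') = 2 * fS (a'+b') + (a'+b') := by
        have : 2*a'+2*b' = 2*(a'+b') := by ring
        rw [this, fS_even]
      have c1 : fS (a'+1+b') = fS (a'+b'+1) := by congr 1 <;> omega
      have c2 : fS (a'+(b'+1)) = fS (a'+b'+1) := by congr 1 <;> omega
      omega
    · have h1 := ih (a'+b') (by omega) a' b' rfl
      have h2 := ih (a'+b'+1) (by omega) a' (b'+1) rfl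
      have e1 := fS_even a'
      have e2 := fS_odd b'
      have e3 : fS (2*a'+(2*b'+1)) = fS (a'+b') + fS (a'+b'+1) + (a'+b') := by
        have : 2*a'+(2*b'+1) = 2*(a'+b')+1 := by ring
        rw [this, fS_odd]
      have c1 : fS (a'+(b'+1)) = fS (a'+b'+1) := by congr 1 <;> omega
      omega
    · have h1 := ih (a'+b') (by omega) a' b' rfl
      have h2 := ih (a'+b'+1) (by omega) (a'+1) b' (by ring)
      have e1 := fS_odd a'
      have e2 := fS_even b'
      have e3 : fS (2*a'+1+2*b') = fS (a'+b') + fS (a'+b'+1) + (a'+b') := by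
        have : 2*a'+1+2*b' = 2*(a'+b')+1 := by ring
        rw [this, fS_odd]
      have c1 : fS (a'+1+b') = fS (a'+b'+1) := by congr 1 <;> omega
      omega
    · have h1 := ih (a'+b'+1) (by omega) (a'+1) b' (by ring)
      have h2 := ih (a'+b'+1) (by omega) a' (b'+1) rfl
      have e1 := fS_odd a'
      have e2 := fS_odd b'
      have e3 : fS (2*a'+1+(2*b'+1)) = 2 * fS (a'+b'+1) + (a'+b'+1) := by
        have : 2*a'+1+(2*b'+1) = 2*(a'+b'+1) := by ring
        rw [this, fS_even]
      have c1 : fS (a'+1+b') = fS (a'+b'+1) := by congr 1 <;> omega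
      have c2 : fS (a'+(b'+1)) = fS (a'+b'+1) := by congr 1 <;> omega
      omega

lemma hammingDist_succ {d : ℕ} (x y : Fin (d+1) → Bool) :
    hammingDist x y = (if x 0 = y 0 then 0 else 1) + hammingDist (Fin.tail x) (Fin.tail y) := by
  simp only [hammingDist, Finset.card_filter, Fin.sum_univ_succ, Fin.tail]
  by_cases h : x 0 = y 0 <;> simp [h, Finset.card_filter]
  all_goals
    have hc := Finset.card_filter (fun i : Fin d => ¬ x i.succ = y i.succ) Finset.univ
    refine Eq.trans ?_ hc.symm
    exact Finset.sum_congr rfl (fun i _ => by split_ifs <;> simp_all)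

lemma graph_bound : ∀ (d : ℕ) (V : Finset (Fin d → Bool)),
    (Finset.filter (fun p : (Fin d → Bool) × (Fin d → Bool) => hammingDist p.1 p.2 = 1)
      (V ×ˢ V)).card ≤ 2 * fS V.card := by
  intro d
  induction d with
  | zero =>
    intro V
    have h : ∀ p ∈ V ×ˢ V,
        ¬(hammingDist p.1 (p.2 : Fin 0 → Bool) = 1) := by
      intro p _
      have : p.1 = p.2 := Subsingleton.elim _ _
      simp [this]
    rw [Finset.filter_false_of_mem h]
    simp
  | succ d ih =>
    intro V
    classical
    set W : Bool → Finset (Fin d → Bool) :=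
      fun b => (V.filter fun x => x 0 = b).image Fin.tail with hW
    -- recover original vector from membership in W b
    have hWmem : ∀ b z, z ∈ W b → Fin.cons b z ∈ V ∧ (Fin.cons b z : Fin (d+1) → Bool) 0 = b ∧
        Fin.tail (Fin.cons b z : Fin (d+1) → Bool) = z := by
      intro b z hz
      rw [hW] at hz
      simp only [Finset.mem_image, Finset.mem_filter] at hz
      obtain ⟨x, ⟨hxV, hx0⟩, hxz⟩ := hz
      have hx : (Fin.cons b z : Fin (d+1) → Bool) = x := by
        rw [← hxz, ← hx0, Fin.cons_self_tail]
      refine ⟨hx ▸ hxV, Fin.cons_zero _ _, Fin.tail_cons _ _⟩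
    have hWcard : ∀ b, (W b).card = (V.filter fun x => x 0 = b).card := by
      intro b
      apply Finset.card_image_of_injOn
      intro x hx y hy hxy
      simp only [Finset.coe_filter, Set.mem_setOf_eq] at hx hy
      have : Fin.cons (x 0) (Fin.tail x) = Fin.cons (y 0) (Fin.tail y) := by
        rw [hx.2, hy.2, hxy]
      rwa [Fin.cons_self_tail, Fin.cons_self_tail] at this
    have hVcard : (W false).card + (W true).card = V.card := by
      rw [hWcard, hWcard]
      have := Finset.card_filter_add_card_filter_not (s := V)
        (p := fun x => x 0 = false)
      simpa only [Bool.not_eq_false] using this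
    set S := (V ×ˢ V).filter
      (fun p : (Fin (d+1) → Bool) × (Fin (d+1) → Bool) => hammingDist p.1 p.2 = 1) with hS
    have hSmem : ∀ p : (Fin (d+1) → Bool) × (Fin (d+1) → Bool),
        p ∈ S ↔ p.1 ∈ V ∧ p.2 ∈ V ∧ hammingDist p.1 p.2 = 1 := by
      intro p
      rw [hS]
      simp only [Finset.mem_filter, Finset.mem_product]
      tauto
    -- split by the first coordinate values
    have split : S.card
        = ((S.filter fun p => p.1 0 = false).filter fun p => p.2 0 = false).card
        + ((S.filter fun p => p.1 0 = false).filter fun p => p.2 0 = true).card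
        + ((S.filter fun p => p.1 0 = true).filter fun p => p.2 0 = false).card
        + ((S.filter fun p => p.1 0 = true).filter fun p => p.2 0 = true).card := by
      have h1 := Finset.card_filter_add_card_filter_not (s := S)
        (p := fun p => p.1 0 = false)
      have h2 := Finset.card_filter_add_card_filter_not
        (s := S.filter fun p => p.1 0 = false) (p := fun p => p.2 0 = false)
      have h3 := Finset.card_filter_add_card_filter_not
        (s := S.filter fun p => p.1 0 = true) (p := fun p => p.2 0 = false)
      simp only [Bool.not_eq_false] at h1 h2 h3
      omega
    -- diagonal blocks are isomorphic to the pair sets of W b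
    have diag : ∀ b : Bool,
        ((S.filter fun p => p.1 0 = b).filter fun p => p.2 0 = b).card
        = ((W b ×ˢ W b).filter
            (fun q : (Fin d → Bool) × (Fin d → Bool) => hammingDist q.1 q.2 = 1)).card := by
      intro b
      apply Finset.card_nbij' (fun p => (Fin.tail p.1, Fin.tail p.2))
        (fun q => (Fin.cons b q.1, Fin.cons b q.2))
      · intro p hp
        simp only [Finset.mem_coe, Finset.mem_filter] at hp
        obtain ⟨⟨hpS, h1⟩, h2⟩ := hp
        rw [hSmem] at hpS
        obtain ⟨hp1, hp2, hdist⟩ := hpS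
        rw [hammingDist_succ] at hdist
        rw [h1, h2, if_pos rfl] at hdist
        simp only [Finset.mem_coe, Finset.mem_filter, Finset.mem_product]
        refine ⟨⟨?_, ?_⟩, by omega⟩
        · exact Finset.mem_image_of_mem _ (Finset.mem_filter.mpr ⟨hp1, h1⟩)
        · exact Finset.mem_image_of_mem _ (Finset.mem_filter.mpr ⟨hp2, h2⟩)
      · intro q hq
        simp only [Finset.mem_coe, Finset.mem_filter, Finset.mem_product] at hq
        obtain ⟨⟨hq1, hq2⟩, hdist⟩ := hq
        obtain ⟨m1, z1, t1⟩ := hWmem b q.1 hq1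
        obtain ⟨m2, z2, t2⟩ := hWmem b q.2 hq2
        simp only [Finset.mem_coe, Finset.mem_filter]
        refine ⟨⟨?_, z1⟩, z2⟩
        rw [hSmem]
        refine ⟨m1, m2, ?_⟩
        dsimp only
        rw [hammingDist_succ, z1, z2, if_pos rfl, t1, t2, hdist]
      · intro p hp
        simp only [Finset.mem_coe, Finset.mem_filter] at hp
        obtain ⟨⟨_, h1⟩, h2⟩ := hp
        have e1 : (Fin.cons b (Fin.tail p.1) : Fin (d+1) → Bool) = p.1 := by
          rw [← h1, Fin.cons_self_tail]
        have e2 : (Fin.cons b (Fin.tail p.2) : Fin (d+1) → Bool) = p.2 := by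
          rw [← h2, Fin.cons_self_tail]
        exact Prod.ext e1 e2
      · intro q _
        dsimp only
        rw [Fin.tail_cons, Fin.tail_cons]
    -- off-diagonal blocks are isomorphic to W false ∩ W true
    have offdiag : ∀ a : Bool,
        ((S.filter fun p => p.1 0 = a).filter fun p => p.2 0 = !a).card
        = (W false ∩ W true).card := by
      intro a
      apply Finset.card_nbij' (fun p => Fin.tail p.1)
        (fun z => (Fin.cons a z, Fin.cons (!a) z))
      · intro p hp
        simp only [Finset.mem_coe, Finset.mem_filter] at hp
        obtain ⟨⟨hpS, h1⟩, h2⟩ := hp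
        rw [hSmem] at hpS
        obtain ⟨hp1, hp2, hdist⟩ := hpS
        rw [hammingDist_succ, h1, h2] at hdist
        have hne : a ≠ !a := by cases a <;> simp
        rw [if_neg hne] at hdist
        have hteq : Fin.tail p.1 = Fin.tail p.2 := by
          apply hammingDist_eq_zero.mp; omega
        rw [Finset.mem_coe, Finset.mem_inter]
        constructor
        · cases a with
          | false => exact Finset.mem_image_of_mem _ (Finset.mem_filter.mpr ⟨hp1, h1⟩)
          | true =>
            beta_reduce
            rw [hteq]
            exact Finset.mem_image_of_mem _ (Finset.mem_filter.mpr ⟨hp2, by simpa using h2⟩)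
        · cases a with
          | false =>
            beta_reduce
            rw [hteq]
            exact Finset.mem_image_of_mem _ (Finset.mem_filter.mpr ⟨hp2, by simpa using h2⟩)
          | true => exact Finset.mem_image_of_mem _ (Finset.mem_filter.mpr ⟨hp1, h1⟩)
      · intro z hz
        rw [Finset.mem_coe, Finset.mem_inter] at hz
        have ha : z ∈ W a := by cases a with
          | false => exact hz.1
          | true => exact hz.2
        have hna : z ∈ W (!a) := by cases a with
          | false => exact hz.2
          | true => exact hz.1
        obtain ⟨m1, z1, _⟩ := hWmem a z ha
        obtain ⟨m2, z2, _⟩ := hWmem (!a) z hna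
        simp only [Finset.mem_coe, Finset.mem_filter]
        refine ⟨⟨?_, z1⟩, z2⟩
        rw [hSmem]
        refine ⟨m1, m2, ?_⟩
        dsimp only
        rw [hammingDist_succ, z1, z2, Fin.tail_cons, Fin.tail_cons]
        have hne : a ≠ !a := by cases a <;> simp
        rw [if_neg hne]
        simp
      · intro p hp
        simp only [Finset.mem_coe, Finset.mem_filter] at hp
        obtain ⟨⟨hpS, h1⟩, h2⟩ := hp
        rw [hSmem] at hpS
        obtain ⟨_, _, hdist⟩ := hpS
        rw [hammingDist_succ, h1, h2] at hdist
        have hne : a ≠ !a := by cases a <;> simp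
        rw [if_neg hne] at hdist
        have hteq : Fin.tail p.1 = Fin.tail p.2 := by
          apply hammingDist_eq_zero.mp; omega
        have e1 : (Fin.cons a (Fin.tail p.1) : Fin (d+1) → Bool) = p.1 := by
          rw [← h1, Fin.cons_self_tail]
        have e2 : (Fin.cons (!a) (Fin.tail p.1) : Fin (d+1) → Bool) = p.2 := by
          rw [hteq, ← h2, Fin.cons_self_tail]
        exact Prod.ext e1 e2
      · intro z _
        dsimp only
        rw [Fin.tail_cons]
    have hinter : (W false ∩ W true).card ≤ min (W false).card (W true).card :=
      le_min (Finset.card_le_card Finset.inter_subset_left)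
        (Finset.card_le_card Finset.inter_subset_right)
    have hkey := fS_key ((W false).card + (W true).card) (W false).card (W true).card rfl
    have h00 := diag false
    have h11 := diag true
    have h01 := offdiag false
    have h10 := offdiag true
    simp only [Bool.not_false, Bool.not_true] at h01 h10
    have b0 := ih (W false)
    have b1 := ih (W true)
    have hfeq : fS ((W false).card + (W true).card) = fS V.card := by rw [hVcard]
    omega

theorem hypercube_edge_maximum (d n : ℕ) (hn : n ≤ 2 ^ d)
    (V : Finset (Fin d → Bool)) (hV : V.card = n) :
    (Finset.filter (fun p : (Fin d → Bool) × (Fin d → Bool) => hammingDist p.1 p.2 = 1)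
        (V ×ˢ V)).card
      ≤ 2 * ∑ k ∈ Finset.range n, hammingWeight k := by
  have h := graph_bound d V
  rw [hV] at h
  exact h
end

section
/- For any finite subset V of ℤ^d of size n, the number of pairs {u,v} ⊆ V with ℓ¹-distance exactly 1 is at most ∑_{k=0}^{n-1} H(k), where H is the Hamming weight function. -/
open Finset

def fsum (n : ℕ) : ℕ := ∑ k ∈ Finset.range n, hammingWeight k

lemma hw_zero : hammingWeight 0 = 0 := by simp [hammingWeight]

lemma hw_even (m : ℕ) : hammingWeight (2*m) = hammingWeight m := by
  rcases Nat.eq_zero_or_pos m with h|h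
  · simp [h]
  · unfold hammingWeight
    rw [Nat.digits_def' (by norm_num : 1 < 2) (by omega)]
    simp [Nat.mul_div_cancel_left, Nat.mul_mod_right]

lemma hw_odd (m : ℕ) : hammingWeight (2*m+1) = hammingWeight m + 1 := by
  unfold hammingWeight
  rw [Nat.digits_def' (by norm_num : 1 < 2) (by omega)]
  have h1 : (2*m+1) % 2 = 1 := by omega
  have h2 : (2*m+1) / 2 = m := by omega
  rw [h1, h2]
  simp [Nat.add_comm]

lemma fsum_succ (m : ℕ) : fsum (m+1) = fsum m + hammingWeight m := Finset.sum_range_succ _ _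

lemma fsum_double (m : ℕ) : fsum (2*m) = 2 * fsum m + m := by
  induction m with
  | zero => simp [fsum]
  | succ k ih =>
      have h : 2*(k+1) = (2*k+1)+1 := by ring
      rw [h, fsum_succ, fsum_succ, hw_odd, fsum_succ]
      have := hw_even k
      omega

lemma fsum_odd (m : ℕ) : fsum (2*m+1) = fsum m + fsum (m+1) + m := by
  rw [fsum_succ, fsum_double, hw_even, fsum_succ]
  omega

lemma fkey : ∀ n a b, a + b = n → fsum a + fsum b + min a b ≤ fsum n := by
  intro n
  induction n using Nat.strong_induction_on with
  | _ n ih =>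
  intro a b hab
  rcases Nat.eq_zero_or_pos a with ha|ha
  · subst ha; simp at hab; subst hab; simp [fsum]
  rcases Nat.eq_zero_or_pos b with hb|hb
  · subst hb; simp at hab; subst hab; simp [fsum]
  rcases Nat.even_or_odd a with ⟨c,hc⟩|⟨c,hc⟩ <;> rcases Nat.even_or_odd b with ⟨e,he⟩|⟨e,he⟩
  · -- even even
    have hc' : a = 2*c := by omega
    have he' : b = 2*e := by omega
    have hn : n = 2*(c+e) := by omega
    have h1 : fsum c + fsum e + min c e ≤ fsum (c+e) := ih (c+e) (by omega) c e rfl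
    have e1 : fsum a = 2 * fsum c + c := by rw [hc', fsum_double]
    have e2 : fsum b = 2 * fsum e + e := by rw [he', fsum_double]
    have e3 : fsum n = 2 * fsum (c+e) + (c+e) := by rw [hn, fsum_double]
    omega
  · -- a even, b odd
    have hc' : a = 2*c := by omega
    have hn : n = 2*(c+e)+1 := by omega
    have h1 : fsum c + fsum e + min c e ≤ fsum (c+e) := ih (c+e) (by omega) c e rfl
    have h2 : fsum c + fsum (e+1) + min c (e+1) ≤ fsum (c+e+1) := ih (c+e+1) (by omega) c (e+1) rfl
    have e1 : fsum a = 2 * fsum c + c := by rw [hc', fsum_double]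
    have e2 : fsum b = fsum e + fsum (e+1) + e := by rw [he, fsum_odd]
    have e3 : fsum n = fsum (c+e) + fsum (c+e+1) + (c+e) := by rw [hn, fsum_odd]
    omega
  · -- a odd, b even
    have he' : b = 2*e := by omega
    have hn : n = 2*(c+e)+1 := by omega
    have h1 : fsum e + fsum c + min e c ≤ fsum (c+e) := by
      have := ih (c+e) (by omega) e c (by omega); omega
    have h2 : fsum e + fsum (c+1) + min e (c+1) ≤ fsum (c+e+1) := by
      have := ih (c+e+1) (by omega) e (c+1) (by omega); omega
    have e1 : fsum a = fsum c + fsum (c+1) + c := by rw [hc, fsum_odd]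
    have e2 : fsum b = 2 * fsum e + e := by rw [he', fsum_double]
    have e3 : fsum n = fsum (c+e) + fsum (c+e+1) + (c+e) := by rw [hn, fsum_odd]
    omega
  · -- odd odd
    have hn : n = 2*(c+e+1) := by omega
    have h1 : fsum c + fsum (e+1) + min c (e+1) ≤ fsum (c+e+1) := ih (c+e+1) (by omega) c (e+1) rfl
    have h2 : fsum (c+1) + fsum e + min (c+1) e ≤ fsum (c+e+1) := by
      have := ih (c+e+1) (by omega) (c+1) e (by omega); omega
    have e1 : fsum a = fsum c + fsum (c+1) + c := by rw [hc, fsum_odd]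
    have e2 : fsum b = fsum e + fsum (e+1) + e := by rw [he, fsum_odd]
    have e3 : fsum n = 2 * fsum (c+e+1) + (c+e+1) := by rw [hn, fsum_double]
    omega

section
variable {d : ℕ}

lemma cross_data {i : Fin d} {x y : Fin d → ℤ} (hxy : x i < y i)
    (h : (∑ j, |x j - y j|) = 1) :
    y i = x i + 1 ∧ ∀ j, j ≠ i → x j = y j := by
  have h1 : |x i - y i| ≤ ∑ j, |x j - y j| :=
    Finset.single_le_sum (f := fun j => |x j - y j|) (fun j _ => abs_nonneg _) (mem_univ i)
  rw [h] at h1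
  have h2 : y i = x i + 1 := by
    have := abs_le.mp h1
    omega
  refine ⟨h2, fun j hj => ?_⟩
  have hsplit : ∑ j, |x j - y j| = |x i - y i| + ∑ j ∈ univ.erase i, |x j - y j| :=
    (Finset.add_sum_erase _ _ (mem_univ i)).symm
  have habs : |x i - y i| = 1 := by rw [abs_sub_comm, h2]; simp
  have hz : ∑ j ∈ univ.erase i, |x j - y j| = 0 := by omega
  have := (Finset.sum_eq_zero_iff_of_nonneg (fun j _ => abs_nonneg _)).mp hz j (by simp [hj])
  have := abs_eq_zero.mp this
  omega

lemma cross_card (S T : Finset (Fin d → ℤ)) (i : Fin d)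
    (hST : ∀ x ∈ S, ∀ y ∈ T, x i < y i) :
    ((S ×ˢ T).filter (fun p => (∑ j, |p.1 j - p.2 j|) = 1)).card ≤ min S.card T.card := by
  have key : ∀ p ∈ (S ×ˢ T).filter (fun p => (∑ j, |p.1 j - p.2 j|) = 1),
      p.2 i = p.1 i + 1 ∧ ∀ j, j ≠ i → p.1 j = p.2 j := by
    intro p hp
    rw [mem_filter, mem_product] at hp
    exact cross_data (hST _ hp.1.1 _ hp.1.2) hp.2
  apply le_min
  · apply Finset.card_le_card_of_injOn Prod.fst
    · intro p hp
      rw [mem_coe, mem_filter, mem_product] at hp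
      exact hp.1.1
    · intro p hp q hq hpq
      obtain ⟨h1, h2⟩ := key p hp
      obtain ⟨h3, h4⟩ := key q hq
      refine Prod.ext hpq (funext fun j => ?_)
      by_cases hji : j = i
      · subst hji; rw [h1, h3, hpq]
      · rw [← h2 j hji, ← h4 j hji, hpq]
  · apply Finset.card_le_card_of_injOn Prod.snd
    · intro p hp
      rw [mem_coe, mem_filter, mem_product] at hp
      exact hp.1.2
    · intro p hp q hq hpq
      obtain ⟨h1, h2⟩ := key p hp
      obtain ⟨h3, h4⟩ := key q hq
      refine Prod.ext (funext fun j => ?_) hpq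
      by_cases hji : j = i
      · subst hji
        have := congrFun hpq j
        omega
      · rw [h2 j hji, h4 j hji, hpq]

lemma swap_filter_card (S T : Finset (Fin d → ℤ)) :
    ((T ×ˢ S).filter (fun p => (∑ j, |p.1 j - p.2 j|) = 1)).card
      = ((S ×ˢ T).filter (fun p => (∑ j, |p.1 j - p.2 j|) = 1)).card := by
  apply Finset.card_bij (fun p _ => Prod.swap p)
  · intro p hp
    rw [mem_filter, mem_product] at hp ⊢
    refine ⟨⟨hp.1.2, hp.1.1⟩, ?_⟩
    rw [← hp.2]
    exact Finset.sum_congr rfl (fun j _ => abs_sub_comm _ _)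
  · intro p _ q _ h
    exact Prod.swap_injective h
  · intro q hq
    refine ⟨Prod.swap q, ?_, by simp⟩
    rw [mem_filter, mem_product] at hq ⊢
    refine ⟨⟨hq.1.2, hq.1.1⟩, ?_⟩
    rw [← hq.2]
    exact Finset.sum_congr rfl (fun j _ => abs_sub_comm _ _)

end

section
variable {d : ℕ}

lemma main_ind : ∀ n (V : Finset (Fin d → ℤ)), V.card = n →
    (Finset.filter (fun p : (Fin d → ℤ) × (Fin d → ℤ) => (∑ i, |p.1 i - p.2 i|) = 1)
        (V ×ˢ V)).card ≤ 2 * fsum n := by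
  intro n
  induction n using Nat.strong_induction_on with
  | _ n ih =>
  intro V hV
  by_cases hsep : ∃ u ∈ V, ∃ v ∈ V, ∃ i, u i < v i
  · obtain ⟨u, hu, v, hv, i, hi⟩ := hsep
    set P : (Fin d → ℤ) × (Fin d → ℤ) → Prop := fun p => (∑ i, |p.1 i - p.2 i|) = 1 with hP
    set A := V.filter (fun w => w i ≤ u i) with hA
    set B := V.filter (fun w => ¬ (w i ≤ u i)) with hB
    have hunion : A ∪ B = V := filter_union_filter_not_eq _ V
    have hdisj : Disjoint A B := disjoint_filter_filter_not V V _
    have hcards : A.card + B.card = n := by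
      rw [← hV, ← hunion, card_union_of_disjoint hdisj]
    have huA : u ∈ A := mem_filter.mpr ⟨hu, le_refl _⟩
    have hvB : v ∈ B := mem_filter.mpr ⟨hv, by omega⟩
    have hApos : 0 < A.card := card_pos.mpr ⟨u, huA⟩
    have hBpos : 0 < B.card := card_pos.mpr ⟨v, hvB⟩
    have hAn : A.card < n := by omega
    have hBn : B.card < n := by omega
    have hAB : ∀ x ∈ A, ∀ y ∈ B, x i < y i := by
      intro x hx y hy
      have hx' := (mem_filter.mp hx).2
      have hy' := (mem_filter.mp hy).2
      omega
    have hsplit : (V ×ˢ V) = ((A ×ˢ A) ∪ (A ×ˢ B)) ∪ ((B ×ˢ A) ∪ (B ×ˢ B)) := by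
      rw [← hunion, union_product, product_union, product_union]
    have hle : ((V ×ˢ V).filter P).card ≤
        ((A ×ˢ A).filter P).card + ((A ×ˢ B).filter P).card
        + (((B ×ˢ A).filter P).card + ((B ×ˢ B).filter P).card) := by
      rw [hsplit, filter_union, filter_union, filter_union]
      calc _ ≤ (((A ×ˢ A).filter P ∪ (A ×ˢ B).filter P)).card
              + (((B ×ˢ A).filter P ∪ (B ×ˢ B).filter P)).card := card_union_le _ _
        _ ≤ _ := by
            gcongr <;> exact card_union_le _ _
    have h1 : ((A ×ˢ A).filter P).card ≤ 2 * fsum A.card := ih A.card hAn A rfl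
    have h2 : ((B ×ˢ B).filter P).card ≤ 2 * fsum B.card := ih B.card hBn B rfl
    have h3 : ((A ×ˢ B).filter P).card ≤ min A.card B.card := cross_card A B i hAB
    have h4 : ((B ×ˢ A).filter P).card ≤ min A.card B.card := by
      show ((B ×ˢ A).filter (fun p => (∑ j, |p.1 j - p.2 j|) = 1)).card ≤ _
      rw [swap_filter_card A B]
      exact h3
    have h5 : fsum A.card + fsum B.card + min A.card B.card ≤ fsum n :=
      fkey n A.card B.card hcards
    show ((V ×ˢ V).filter P).card ≤ 2 * fsum n
    omega
  · have hempty : (V ×ˢ V).filter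
        (fun p : (Fin d → ℤ) × (Fin d → ℤ) => (∑ i, |p.1 i - p.2 i|) = 1) = ∅ := by
      rw [filter_eq_empty_iff]
      intro p hp
      rw [mem_product] at hp
      push_neg at hsep
      have hpq : p.1 = p.2 := funext fun j =>
        le_antisymm (hsep p.2 hp.2 p.1 hp.1 j) (hsep p.1 hp.1 p.2 hp.2 j)
      rw [hpq]
      simp
    rw [hempty]
    simp

end

theorem lattice_edge_maximum (d n : ℕ) (V : Finset (Fin d → ℤ)) (hV : V.card = n) :
    (Finset.filter (fun p : (Fin d → ℤ) × (Fin d → ℤ) => (∑ i, |p.1 i - p.2 i|) = 1)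
        (V ×ˢ V)).card
      ≤ 2 * ∑ k ∈ Finset.range n, hammingWeight k :=
  main_ind n V hV
end

section
/- Let V be a finite subset of ℤ^d. Then there exists a subset V' of {0,1}^{d'} for some d' such that |V'| = |V| and the number of pairs at ℓ¹-distance 1 in V' equals the number of pairs at ℓ¹-distance 1 in V. -/
lemma unary_sum (M : ℕ) (a : ℤ) (h0 : 0 ≤ a) (h1 : a ≤ M) :
    ∑ j ∈ Finset.range M, (if (j : ℤ) < a then (1:ℤ) else 0) = a := by
  rw [Finset.sum_boole]
  have : (Finset.range M).filter (fun j : ℕ => ((j : ℤ) < a)) = Finset.range a.toNat := by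
    ext j
    simp only [Finset.mem_filter, Finset.mem_range]
    omega
  rw [this, Finset.card_range]
  omega

lemma unary_dist_aux (M : ℕ) (a b : ℤ) (ha0 : 0 ≤ a) (ha1 : a ≤ M)
    (hb0 : 0 ≤ b) (hb1 : b ≤ M) (hba : b ≤ a) :
    ∑ j ∈ Finset.range M, |(if (j:ℤ) < a then (1:ℤ) else 0) - (if (j:ℤ) < b then 1 else 0)|
      = |a - b| := by
  have hterm : ∀ j ∈ Finset.range M,
      |(if (j:ℤ) < a then (1:ℤ) else 0) - (if (j:ℤ) < b then 1 else 0)|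
        = (if (j:ℤ) < a then (1:ℤ) else 0) - (if (j:ℤ) < b then 1 else 0) := by
    intro j _
    split_ifs <;> simp_all <;> omega
  rw [Finset.sum_congr rfl hterm, Finset.sum_sub_distrib,
    unary_sum M a ha0 ha1, unary_sum M b hb0 hb1, abs_of_nonneg (by omega)]

lemma unary_dist (M : ℕ) (a b : ℤ) (ha0 : 0 ≤ a) (ha1 : a ≤ M)
    (hb0 : 0 ≤ b) (hb1 : b ≤ M) :
    ∑ j ∈ Finset.range M, |(if (j:ℤ) < a then (1:ℤ) else 0) - (if (j:ℤ) < b then 1 else 0)|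
      = |a - b| := by
  rcases le_total b a with h | h
  · exact unary_dist_aux M a b ha0 ha1 hb0 hb1 h
  · rw [abs_sub_comm a b, ← unary_dist_aux M b a hb0 hb1 ha0 ha1 h]
    exact Finset.sum_congr rfl fun j _ => abs_sub_comm _ _

theorem lattice_to_hypercube (d : ℕ) (V : Finset (Fin d → ℤ)) :
    ∃ (d' : ℕ) (V' : Finset (Fin d' → ℤ)),
      (∀ v ∈ V', ∀ i, v i = 0 ∨ v i = 1) ∧
      V'.card = V.card ∧
      (Finset.filter (fun p : (Fin d' → ℤ) × (Fin d' → ℤ) => (∑ i, |p.1 i - p.2 i|) = 1)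
          (V' ×ˢ V')).card
        = (Finset.filter (fun p : (Fin d → ℤ) × (Fin d → ℤ) => (∑ i, |p.1 i - p.2 i|) = 1)
            (V ×ˢ V)).card := by
  classical
  obtain ⟨N, hN⟩ : ∃ N : ℕ, ∀ v ∈ V, ∀ i, (v i).natAbs ≤ N :=
    ⟨V.sup fun v => Finset.univ.sup fun i => (v i).natAbs, fun v hv i =>
      le_trans (Finset.le_sup (f := fun i => (v i).natAbs) (Finset.mem_univ i))
        (Finset.le_sup (f := fun v => Finset.univ.sup fun i => (v i).natAbs) hv)⟩
  obtain ⟨M, hM⟩ : ∃ M : ℕ, M = 2 * N := ⟨2 * N, rfl⟩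
  have hbound : ∀ v ∈ V, ∀ i : Fin d, 0 ≤ v i + N ∧ v i + N ≤ M := by
    intro v hv i
    have := hN v hv i
    omega
  set f : (Fin d → ℤ) → (Fin (d * M) → ℤ) := fun v k =>
    if (((finProdFinEquiv.symm k).2 : ℤ)) < v (finProdFinEquiv.symm k).1 + N then 1 else 0
    with hfdef
  have hdist : ∀ u ∈ V, ∀ v ∈ V,
      ∑ k : Fin (d * M), |f u k - f v k| = ∑ i, |u i - v i| := by
    intro u hu v hv
    rw [← Equiv.sum_comp finProdFinEquiv (fun k => |f u k - f v k|)]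
    simp only [hfdef, Equiv.symm_apply_apply]
    rw [Fintype.sum_prod_type]
    refine Finset.sum_congr rfl fun i _ => ?_
    have hu' := hbound u hu i
    have hv' := hbound v hv i
    have key := unary_dist M (u i + N) (v i + N) hu'.1 hu'.2 hv'.1 hv'.2
    rw [Fin.sum_univ_eq_sum_range
      (fun j => |(if (j:ℤ) < u i + N then (1:ℤ) else 0) - (if (j:ℤ) < v i + N then 1 else 0)|) M]
    rw [key]
    ring_nf
  have hinj : Set.InjOn f V := by
    intro u hu v hv h
    have h0 : ∑ i, |u i - v i| = 0 := by
      rw [← hdist u hu v hv, h]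
      simp
    funext i
    have := (Finset.sum_eq_zero_iff_of_nonneg (fun j _ => abs_nonneg (u j - v j))).mp h0
      i (Finset.mem_univ i)
    have : |u i - v i| = 0 := this
    exact sub_eq_zero.mp (abs_eq_zero.mp this)
  refine ⟨d * M, V.image f, ?_, Finset.card_image_of_injOn hinj, ?_⟩
  · intro v' hv' i
    obtain ⟨v, hv, rfl⟩ := Finset.mem_image.mp hv'
    simp only [hfdef]
    split_ifs <;> simp
  · refine (Finset.card_bij (fun p _ => (f p.1, f p.2)) ?_ ?_ ?_).symm
    · rintro ⟨u, v⟩ hp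
      rw [Finset.mem_filter, Finset.mem_product] at hp ⊢
      exact ⟨⟨Finset.mem_image_of_mem f hp.1.1, Finset.mem_image_of_mem f hp.1.2⟩,
        by rw [hdist u hp.1.1 v hp.1.2]; exact hp.2⟩
    · rintro ⟨u, v⟩ hp ⟨u', v'⟩ hp' h
      rw [Finset.mem_filter, Finset.mem_product] at hp hp'
      have h1 := congrArg Prod.fst h
      have h2 := congrArg Prod.snd h
      simp only at h1 h2
      exact Prod.ext (hinj hp.1.1 hp'.1.1 h1) (hinj hp.1.2 hp'.1.2 h2)
    · rintro ⟨a, b⟩ hab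
      rw [Finset.mem_filter, Finset.mem_product] at hab
      obtain ⟨u, hu, rfl⟩ := Finset.mem_image.mp hab.1.1
      obtain ⟨v, hv, rfl⟩ := Finset.mem_image.mp hab.1.2
      refine ⟨(u, v), ?_, rfl⟩
      rw [Finset.mem_filter, Finset.mem_product]
      exact ⟨⟨hu, hv⟩, by rw [← hdist u hu v hv]; exact hab.2⟩
end

section
/- Let a_1, ..., a_d be integers with at least two of them nonzero. Then the set of (t_1, ..., t_d) in an open subset of ℝ^d satisfying 2∑_{i<j} a_i a_j cos(t_i - t_j) = 1 - ∑_j a_j² contains no nonempty open set; equivalently, the identity 2∑_{i<j} a_i a_j cos(t_i - t_j) = 1 - a_1² - ... - a_d² cannot hold for all (t_1,...,t_d) in a nonempty open subset of ℝ^d. -/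
open Real Finset
lemma trigL {A B c s₀ δ : ℝ} (hδ : 0 < δ)
    (h : ∀ s, |s - s₀| < δ → A * Real.cos s + B * Real.sin s = c) : A = 0 ∧ B = 0 := by
  set h0 := min δ π / 2 with hh0
  have hπ : 0 < π := Real.pi_pos
  have h0pos : 0 < h0 := by positivity
  have h0δ : h0 < δ := by
    have : min δ π ≤ δ := min_le_left _ _
    linarith
  have h0π : h0 < π := by
    have : min δ π ≤ π := min_le_right _ _
    linarith
  have e0 := h s₀ (by simpa using hδ)
  have e1 := h (s₀ + h0) (by rw [abs_of_pos] <;> simp [h0pos, h0δ])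
  have e2 := h (s₀ - h0) (by rw [abs_sub_comm]; rw [abs_of_pos] <;> simp [h0pos, h0δ])
  rw [Real.cos_add, Real.sin_add] at e1
  rw [Real.cos_sub, Real.sin_sub] at e2
  have hc1 : Real.cos h0 < 1 := by
    have := Real.cos_lt_cos_of_nonneg_of_le_pi (le_refl 0) (le_of_lt h0π) h0pos
    simpa using this
  have hs : 0 < Real.sin h0 := Real.sin_pos_of_pos_of_lt_pi h0pos h0π
  have hpy : Real.sin s₀ ^ 2 + Real.cos s₀ ^ 2 = 1 := Real.sin_sq_add_cos_sq s₀
  have hcz : c = 0 := by nlinarith [e1, e2, e0, hc1]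
  have hD : A * Real.cos s₀ + B * Real.sin s₀ = 0 := by rw [e0, hcz]
  have hE : B * Real.cos s₀ - A * Real.sin s₀ = 0 := by
    have h12 : (B * Real.cos s₀ - A * Real.sin s₀) * (2 * Real.sin h0) = 0 := by
      linarith [e1, e2]
    have := mul_eq_zero.mp h12
    rcases this with h' | h'
    · exact h'
    · linarith
  constructor
  · linear_combination Real.cos s₀ * hD - Real.sin s₀ * hE - A * hpy
  · linear_combination Real.sin s₀ * hD + Real.cos s₀ * hE - B * hpy
lemma keyId (d : ℕ) (a : Fin d → ℤ) (t : Fin d → ℝ) :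
    2 * ∑ p ∈ Finset.univ.filter (fun p : Fin d × Fin d => p.1 < p.2),
        (a p.1 : ℝ) * (a p.2 : ℝ) * Real.cos (t p.1 - t p.2)
      = (∑ k, (a k : ℝ) * Real.cos (t k)) ^ 2 + (∑ k, (a k : ℝ) * Real.sin (t k)) ^ 2
        - ∑ k, (a k : ℝ) ^ 2 := by
  classical
  set F : Fin d × Fin d → ℝ := fun p => (a p.1 : ℝ) * (a p.2 : ℝ) * Real.cos (t p.1 - t p.2) with hF
  have hfull : ∑ p ∈ (Finset.univ : Finset (Fin d × Fin d)), F p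
      = (∑ k, (a k : ℝ) * Real.cos (t k)) ^ 2 + (∑ k, (a k : ℝ) * Real.sin (t k)) ^ 2 := by
    rw [sq, sq, Finset.sum_mul_sum, Finset.sum_mul_sum, ← Finset.sum_add_distrib]
    rw [← Finset.univ_product_univ, Finset.sum_product]
    refine Finset.sum_congr rfl fun k _ => ?_
    rw [← Finset.sum_add_distrib]
    refine Finset.sum_congr rfl fun l _ => ?_
    simp only [hF, Real.cos_sub]
    ring
  -- split univ into diag, lt, gt
  have hsplit : (Finset.univ : Finset (Fin d × Fin d))
      = (Finset.univ.filter fun p : Fin d × Fin d => p.1 < p.2)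
        ∪ ((Finset.univ.filter fun p : Fin d × Fin d => p.2 < p.1)
        ∪ (Finset.univ.filter fun p : Fin d × Fin d => p.1 = p.2)) := by
    ext p
    simp only [Finset.mem_union, Finset.mem_filter, Finset.mem_univ, true_and]
    rcases lt_trichotomy p.1 p.2 with h | h | h <;> simp [h]
  have hdisj1 : Disjoint (Finset.univ.filter fun p : Fin d × Fin d => p.1 < p.2)
      ((Finset.univ.filter fun p : Fin d × Fin d => p.2 < p.1)
        ∪ (Finset.univ.filter fun p : Fin d × Fin d => p.1 = p.2)) := by
    rw [Finset.disjoint_union_right]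
    constructor <;> (rw [Finset.disjoint_filter]; intro p _ h1 h2)
    · exact absurd h2 (asymm h1)
    · exact absurd h2 (ne_of_lt h1)
  have hdisj2 : Disjoint (Finset.univ.filter fun p : Fin d × Fin d => p.2 < p.1)
      (Finset.univ.filter fun p : Fin d × Fin d => p.1 = p.2) := by
    rw [Finset.disjoint_filter]; intro p _ h1 h2; exact absurd h2.symm (ne_of_lt h1)
  have hgt : ∑ p ∈ (Finset.univ.filter fun p : Fin d × Fin d => p.2 < p.1), F p
      = ∑ p ∈ (Finset.univ.filter fun p : Fin d × Fin d => p.1 < p.2), F p := by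
    apply Finset.sum_nbij' (fun p => Prod.swap p) (fun p => Prod.swap p)
    · intro p hp; simp only [Finset.mem_filter, Finset.mem_univ, true_and] at hp ⊢; exact hp
    · intro p hp; simp only [Finset.mem_filter, Finset.mem_univ, true_and] at hp ⊢; exact hp
    · intro p _; simp
    · intro p _; simp
    · intro p _
      simp only [hF, Prod.fst_swap, Prod.snd_swap]
      rw [show t p.2 - t p.1 = -(t p.1 - t p.2) by ring, Real.cos_neg]
      ring
  have hdiag : ∑ p ∈ (Finset.univ.filter fun p : Fin d × Fin d => p.1 = p.2), F p
      = ∑ k, (a k : ℝ) ^ 2 := by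
    rw [Finset.sum_filter]
    rw [← Finset.univ_product_univ, Finset.sum_product]
    refine Finset.sum_congr rfl fun k _ => ?_
    rw [Finset.sum_eq_single k]
    · simp [hF, sq]
    · intro l _ hl; simp [Ne.symm hl]
    · simp
  rw [hsplit, Finset.sum_union hdisj1, Finset.sum_union hdisj2, hgt, hdiag] at hfull
  linarith

theorem cos_identity_not_on_open_set (d : ℕ) (a : Fin d → ℤ)
    (ha : 2 ≤ (Finset.univ.filter (fun j => a j ≠ 0)).card) :
    ¬ ∃ U : Set (Fin d → ℝ), IsOpen U ∧ U.Nonempty ∧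
      ∀ t ∈ U,
        2 * ∑ p ∈ Finset.univ.filter (fun p : Fin d × Fin d => p.1 < p.2),
            (a p.1 : ℝ) * (a p.2 : ℝ) * Real.cos (t p.1 - t p.2)
          = 1 - ∑ j, (a j : ℝ) ^ 2 := by
  classical
  rintro ⟨U, hUo, ⟨t₀, ht₀⟩, hEq⟩
  obtain ⟨i, hi, j, hj, hij⟩ := Finset.one_lt_card.mp ha
  rw [Finset.mem_filter] at hi hj
  have hai : (a i : ℝ) ≠ 0 := Int.cast_ne_zero.mpr hi.2
  have haj : (a j : ℝ) ≠ 0 := Int.cast_ne_zero.mpr hj.2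
  obtain ⟨δ, hδ, hball⟩ := Metric.isOpen_iff.mp hUo t₀ ht₀
  -- the equation in the form G² + H² = 1
  have heq1 : ∀ t ∈ Metric.ball t₀ δ,
      (∑ k, (a k : ℝ) * Real.cos (t k)) ^ 2 + (∑ k, (a k : ℝ) * Real.sin (t k)) ^ 2 = 1 := by
    intro t ht
    have h1 := hEq t (hball ht)
    have h2 := keyId d a t
    linarith
  -- membership of two-coordinate perturbations
  have hmem : ∀ u s : ℝ, |u - t₀ j| < δ → |s - t₀ i| < δ →
      Function.update (Function.update t₀ j u) i s ∈ Metric.ball t₀ δ := by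
    intro u s hu hs
    rw [Metric.mem_ball, dist_pi_lt_iff hδ]
    intro b
    rcases eq_or_ne b i with rfl | hbi
    · simp [Function.update_self, Real.dist_eq, hs]
    · rw [Function.update_of_ne hbi]
      rcases eq_or_ne b j with rfl | hbj
      · simp [Function.update_self, Real.dist_eq, hu]
      · rw [Function.update_of_ne hbj]
        simpa using hδ
  -- for each u, the inner sum over k ≠ i vanishes
  have hPQ : ∀ u : ℝ, |u - t₀ j| < δ →
      (∑ k ∈ Finset.univ.erase i, (a k : ℝ) * Real.cos (Function.update t₀ j u k)) = 0 := by
    intro u hu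
    set t₁ := Function.update t₀ j u with ht₁
    set P := ∑ k ∈ Finset.univ.erase i, (a k : ℝ) * Real.cos (t₁ k) with hP
    set Q := ∑ k ∈ Finset.univ.erase i, (a k : ℝ) * Real.sin (t₁ k) with hQ
    have hdecomp : ∀ s : ℝ, |s - t₀ i| < δ →
        ((a i : ℝ) * Real.cos s + P) ^ 2 + ((a i : ℝ) * Real.sin s + Q) ^ 2 = 1 := by
      intro s hs
      have h1 := heq1 _ (hmem u s hu hs)
      have hGs : (∑ k, (a k : ℝ) * Real.cos (Function.update t₁ i s k))
          = (a i : ℝ) * Real.cos s + P := by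
        rw [← Finset.add_sum_erase _ _ (Finset.mem_univ i), Function.update_self]
        congr 1
        refine Finset.sum_congr rfl fun k hk => ?_
        rw [Function.update_of_ne (Finset.ne_of_mem_erase hk)]
      have hHs : (∑ k, (a k : ℝ) * Real.sin (Function.update t₁ i s k))
          = (a i : ℝ) * Real.sin s + Q := by
        rw [← Finset.add_sum_erase _ _ (Finset.mem_univ i), Function.update_self]
        congr 1
        refine Finset.sum_congr rfl fun k hk => ?_
        rw [Function.update_of_ne (Finset.ne_of_mem_erase hk)]
      rw [hGs, hHs] at h1
      exact h1
    have htrig : ∀ s : ℝ, |s - t₀ i| < δ →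
        (2 * (a i : ℝ) * P) * Real.cos s + (2 * (a i : ℝ) * Q) * Real.sin s
          = 1 - (a i : ℝ) ^ 2 - P ^ 2 - Q ^ 2 := by
      intro s hs
      have h1 := hdecomp s hs
      have hpy : Real.sin s ^ 2 + Real.cos s ^ 2 = 1 := Real.sin_sq_add_cos_sq s
      nlinarith [h1, hpy]
    obtain ⟨hA, _⟩ := trigL hδ htrig
    have : P = 0 := by
      rcases mul_eq_zero.mp hA with h' | h'
      · rcases mul_eq_zero.mp h' with h'' | h''
        · norm_num at h''
        · exact absurd h'' hai
      · exact h'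
    exact this
  -- now vary u: a j * cos u + 0 * sin u = const
  have hj' : j ∈ Finset.univ.erase i := Finset.mem_erase.mpr ⟨fun h => hij h.symm, Finset.mem_univ j⟩
  set R := ∑ k ∈ (Finset.univ.erase i).erase j, (a k : ℝ) * Real.cos (t₀ k) with hR
  have hfin : ∀ u : ℝ, |u - t₀ j| < δ →
      (a j : ℝ) * Real.cos u + 0 * Real.sin u = -R := by
    intro u hu
    have h1 := hPQ u hu
    rw [← Finset.add_sum_erase _ _ hj', Function.update_self] at h1
    have h2 : ∑ k ∈ (Finset.univ.erase i).erase j, (a k : ℝ) * Real.cos (Function.update t₀ j u k)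
        = R := by
      refine Finset.sum_congr rfl fun k hk => ?_
      rw [Function.update_of_ne (Finset.ne_of_mem_erase hk)]
    rw [h2] at h1
    linarith
  obtain ⟨hAz, _⟩ := trigL hδ hfin
  exact haj hAz
end

section
/- For integers a_1, ..., a_d with at least two nonzero, the set A = { (u_1,...,u_d) ∈ (S¹)^d : ‖a_1u_1 + ... + a_du_d‖ = 1 } is a closed, nowhere dense subset of (S¹)^d. -/
open scoped RealInnerProductSpace

noncomputable section BadSetAux

instance factEE : Fact (Module.finrank ℝ (EuclideanSpace ℝ (Fin 2)) = 2) :=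
  ⟨finrank_euclideanSpace_fin⟩

def oEE : Orientation ℝ (EuclideanSpace ℝ (Fin 2)) (Fin 2) :=
  Module.Basis.orientation (EuclideanSpace.basisFun (Fin 2) ℝ).toBasis

def rotE (t : ℝ) : EuclideanSpace ℝ (Fin 2) ≃ₗᵢ[ℝ] EuclideanSpace ℝ (Fin 2) :=
  oEE.rotation (t : Real.Angle)

lemma rotE_apply (t : ℝ) (v : EuclideanSpace ℝ (Fin 2)) :
    rotE t v = Real.cos t • v + Real.sin t • oEE.rightAngleRotation v := by
  rw [rotE, Orientation.rotation_apply, Real.Angle.cos_coe, Real.Angle.sin_coe]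

lemma inner_rotE (t : ℝ) (c v : EuclideanSpace ℝ (Fin 2)) :
    ⟪c, rotE t v⟫ = Real.cos t * ⟪c, v⟫
      + Real.sin t * ⟪c, oEE.rightAngleRotation v⟫ := by
  rw [rotE_apply, inner_add_right, real_inner_smul_right, real_inner_smul_right]

lemma rotE_zero (v : EuclideanSpace ℝ (Fin 2)) : rotE 0 v = v := by simp [rotE_apply]

lemma norm_rotE_sub (t : ℝ) (v : EuclideanSpace ℝ (Fin 2)) (hv : ‖v‖ = 1) (ht : |t| ≤ 1) :
    ‖rotE t v - v‖ ≤ 3 / 2 * |t| := by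
  have hJ : ‖oEE.rightAngleRotation v‖ = 1 := by
    rw [LinearIsometryEquiv.norm_map]; exact hv
  have h1 : rotE t v - v = (Real.cos t - 1) • v + Real.sin t • oEE.rightAngleRotation v := by
    rw [rotE_apply]; module
  have hcos : |Real.cos t - 1| ≤ t ^ 2 / 2 := by
    rcases eq_or_ne t 0 with rfl | ht0
    · simp
    · have h2 := Real.one_sub_sq_div_two_lt_cos (x := t) ht0
      have h3 := Real.cos_le_one t
      rw [abs_le]
      constructor <;> nlinarith
  have hsin : |Real.sin t| ≤ |t| := Real.abs_sin_le_abs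
  calc ‖rotE t v - v‖ ≤ ‖(Real.cos t - 1) • v‖ + ‖Real.sin t • oEE.rightAngleRotation v‖ := by
        rw [h1]; exact norm_add_le _ _
    _ = |Real.cos t - 1| + |Real.sin t| := by
        rw [norm_smul, norm_smul, hv, hJ, Real.norm_eq_abs, Real.norm_eq_abs]; ring
    _ ≤ t ^ 2 / 2 + |t| := add_le_add hcos hsin
    _ ≤ 3 / 2 * |t| := by nlinarith [sq_abs t, abs_nonneg t]

/-- key forcing lemma -/
lemma forcing {δ : ℝ} (hδ : 0 < δ) (c v : EuclideanSpace ℝ (Fin 2)) (hv : ‖v‖ = 1)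
    (b : ℝ) (hb : b ≠ 0)
    (h : ∀ t : ℝ, |t| < δ → ‖c + b • rotE t v‖ = 1) : c = 0 := by
  set t1 : ℝ := min (δ / 2) 1 with ht1def
  have ht1pos : 0 < t1 := lt_min (by linarith) one_pos
  have ht1le : t1 ≤ 1 := min_le_right _ _
  have ht1δ : t1 < δ := lt_of_le_of_lt (min_le_left _ _) (by linarith)
  have key : ∀ t : ℝ, |t| < δ → ⟪c, rotE t v⟫ = ⟪c, v⟫ := by
    intro t ht
    have h0 := h 0 (by simpa using hδ)
    have ht' := h t ht
    have e0 : ‖c + b • rotE 0 v‖ ^ 2 = 1 := by rw [h0]; norm_num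
    have et : ‖c + b • rotE t v‖ ^ 2 = 1 := by rw [ht']; norm_num
    rw [norm_add_sq_real] at e0 et
    have hn : ∀ s : ℝ, ‖b • rotE s v‖ = |b| := by
      intro s
      rw [norm_smul, LinearIsometryEquiv.norm_map, hv, Real.norm_eq_abs, mul_one]
    rw [hn, real_inner_smul_right] at e0 et
    rw [rotE_zero] at e0
    have : b * ⟪c, rotE t v⟫ = b * ⟪c, v⟫ := by nlinarith
    exact mul_left_cancel₀ hb this
  have e1 := key t1 (by rw [abs_of_pos ht1pos]; exact ht1δ)
  have e2 := key (-t1) (by rw [abs_neg, abs_of_pos ht1pos]; exact ht1δ)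
  rw [inner_rotE] at e1 e2
  rw [Real.cos_neg, Real.sin_neg] at e2
  have hsin : Real.sin t1 ≠ 0 := by
    have := Real.sin_pos_of_pos_of_lt_pi ht1pos
      (lt_of_le_of_lt ht1le (by linarith [Real.pi_gt_three]))
    linarith
  have hcos : Real.cos t1 ≠ 1 := by
    intro hc
    have hπ := Real.pi_gt_three
    have := (Real.cos_eq_one_iff_of_lt_of_lt (x := t1) (by linarith) (by linarith)).mp hc
    linarith
  have hβ : ⟪c, oEE.rightAngleRotation v⟫ = 0 := by
    have : 2 * (Real.sin t1 * ⟪c, oEE.rightAngleRotation v⟫) = 0 := by linarith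
    rcases mul_eq_zero.mp this with h' | h'
    · norm_num at h'
    · exact (mul_eq_zero.mp h').resolve_left hsin
  have hα : ⟪c, v⟫ = 0 := by
    have : (Real.cos t1 - 1) * ⟪c, v⟫ = 0 := by nlinarith
    rcases mul_eq_zero.mp this with h' | h'
    · exact absurd (by linarith : Real.cos t1 = 1) hcos
    · exact h'
  have hvne : v ≠ 0 := by intro h0; rw [h0, norm_zero] at hv; norm_num at hv
  refine InnerProductSpace.ext_inner_right_basis (𝕜 := ℝ)
    (oEE.basisRightAngleRotation v hvne) fun i => ?_
  fin_cases i <;> simp [Orientation.coe_basisRightAngleRotation, hα, hβ]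

lemma sum_update_coe {d : ℕ} (a : Fin d → ℝ)
    (x : Fin d → Metric.sphere (0 : EuclideanSpace ℝ (Fin 2)) 1) (j : Fin d)
    (v : Metric.sphere (0 : EuclideanSpace ℝ (Fin 2)) 1) :
    ∑ l, a l • ((Function.update x j v l : EuclideanSpace ℝ (Fin 2)))
      = (∑ l, a l • (x l : EuclideanSpace ℝ (Fin 2))) + a j • (v : EuclideanSpace ℝ (Fin 2))
        - a j • (x j : EuclideanSpace ℝ (Fin 2)) := by
  classical
  have h1 : ∀ l, a l • ((Function.update x j v l : EuclideanSpace ℝ (Fin 2)))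
      = Function.update (fun l => a l • (x l : EuclideanSpace ℝ (Fin 2))) j
          (a j • (v : EuclideanSpace ℝ (Fin 2))) l := by
    intro l
    rcases eq_or_ne l j with rfl | h
    · simp
    · rw [Function.update_of_ne h, Function.update_of_ne h]
  rw [Finset.sum_congr rfl (fun l _ => h1 l),
    Finset.sum_update_of_mem (Finset.mem_univ j)]
  rw [Finset.sum_eq_sum_sdiff_singleton_add (Finset.mem_univ j)
    (fun l => a l • (x l : EuclideanSpace ℝ (Fin 2)))]
  abel

/-- rotation on the sphere -/
def rotS (t : ℝ) (y : Metric.sphere (0 : EuclideanSpace ℝ (Fin 2)) 1) :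
    Metric.sphere (0 : EuclideanSpace ℝ (Fin 2)) 1 :=
  ⟨rotE t y, by
    rw [mem_sphere_zero_iff_norm, LinearIsometryEquiv.norm_map]
    exact mem_sphere_zero_iff_norm.mp y.2⟩

lemma dist_rotS (t : ℝ) (ht : |t| ≤ 1) (y : Metric.sphere (0 : EuclideanSpace ℝ (Fin 2)) 1) :
    dist (rotS t y) y ≤ 3 / 2 * |t| := by
  rw [Subtype.dist_eq, dist_eq_norm]
  exact norm_rotE_sub t y (mem_sphere_zero_iff_norm.mp y.2) ht

end BadSetAux

theorem bad_set_closed_nowhere_dense (d : ℕ) (a : Fin d → ℤ)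
    (ha : 2 ≤ (Finset.univ.filter (fun j => a j ≠ 0)).card) :
    IsClosed {u : Fin d → Metric.sphere (0 : EuclideanSpace ℝ (Fin 2)) 1 |
        ‖∑ j, (a j : ℝ) • (u j : EuclideanSpace ℝ (Fin 2))‖ = 1} ∧
      interior (closure {u : Fin d → Metric.sphere (0 : EuclideanSpace ℝ (Fin 2)) 1 |
        ‖∑ j, (a j : ℝ) • (u j : EuclideanSpace ℝ (Fin 2))‖ = 1}) = ∅ := by
  classical
  set A := {u : Fin d → Metric.sphere (0 : EuclideanSpace ℝ (Fin 2)) 1 |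
      ‖∑ j, (a j : ℝ) • (u j : EuclideanSpace ℝ (Fin 2))‖ = 1} with hAdef
  have hclosed : IsClosed A := by
    have hc : Continuous fun u : Fin d → Metric.sphere (0 : EuclideanSpace ℝ (Fin 2)) 1 =>
        ‖∑ j, (a j : ℝ) • (u j : EuclideanSpace ℝ (Fin 2))‖ := by
      apply Continuous.norm
      apply continuous_finset_sum
      intro i _
      exact (continuous_subtype_val.comp (f := fun u : Fin d → Metric.sphere (0 : EuclideanSpace ℝ (Fin 2)) 1 => u i) (continuous_apply i)).const_smul (a i : ℝ)
    exact isClosed_eq hc continuous_const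
  refine ⟨hclosed, ?_⟩
  rw [hclosed.closure_eq]
  by_contra hne
  obtain ⟨x, hx⟩ := Set.nonempty_iff_ne_empty.mpr hne
  obtain ⟨ε, hε, hball⟩ := Metric.isOpen_iff.mp isOpen_interior x hx
  have hball' : Metric.ball x ε ⊆ A := fun y hy => interior_subset (hball hy)
  have ha' : 1 < (Finset.univ.filter (fun j => a j ≠ 0)).card := by omega
  obtain ⟨j, hj, k, hk, hjk⟩ := Finset.one_lt_card.mp ha'
  have hj0 : (a j : ℝ) ≠ 0 := Int.cast_ne_zero.mpr (Finset.mem_filter.mp hj).2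
  have hk0 : (a k : ℝ) ≠ 0 := Int.cast_ne_zero.mpr (Finset.mem_filter.mp hk).2
  set δ : ℝ := min (ε / 3) 1 with hδdef
  have hδpos : 0 < δ := lt_min (by linarith) one_pos
  have hδ1 : δ ≤ 1 := min_le_right _ _
  have hδε : δ ≤ ε / 3 := min_le_left _ _
  -- perturbed points stay in the ball
  have ballmem : ∀ (y : Fin d → Metric.sphere (0 : EuclideanSpace ℝ (Fin 2)) 1) (m : Fin d)
      (t : ℝ), |t| < δ → (∀ l, dist (y l) (x l) ≤ ε / 2) →
      Function.update y m (rotS t (y m)) ∈ Metric.ball x ε := by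
    intro y m t ht hy
    rw [Metric.mem_ball, dist_pi_lt_iff hε]
    intro l
    rcases eq_or_ne l m with rfl | hlm
    · rw [Function.update_self]
      calc dist (rotS t (y l)) (x l) ≤ dist (rotS t (y l)) (y l) + dist (y l) (x l) :=
            dist_triangle _ _ _
        _ ≤ 3 / 2 * |t| + ε / 2 := add_le_add (dist_rotS t (le_of_lt (lt_of_lt_of_le ht hδ1)) _) (hy l)
        _ < ε := by
            have : |t| < ε / 3 := lt_of_lt_of_le ht hδε
            linarith
    · rw [Function.update_of_ne hlm]
      exact lt_of_le_of_lt (hy l) (by linarith)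
  -- the forcing step
  have force : ∀ (y : Fin d → Metric.sphere (0 : EuclideanSpace ℝ (Fin 2)) 1) (m : Fin d),
      (a m : ℝ) ≠ 0 → (∀ l, dist (y l) (x l) ≤ ε / 2) →
      (∑ l, (a l : ℝ) • (y l : EuclideanSpace ℝ (Fin 2)))
        = (a m : ℝ) • (y m : EuclideanSpace ℝ (Fin 2)) := by
    intro y m hm hy
    set Sy := ∑ l, (a l : ℝ) • (y l : EuclideanSpace ℝ (Fin 2)) with hSydef
    have hc : Sy - (a m : ℝ) • (y m : EuclideanSpace ℝ (Fin 2)) = 0 := by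
      apply forcing hδpos _ (y m) (mem_sphere_zero_iff_norm.mp (y m).2) _ hm
      intro t ht
      have hmem := hball' (ballmem y m t ht hy)
      rw [hAdef, Set.mem_setOf_eq, sum_update_coe] at hmem
      have heq : Sy - (a m : ℝ) • (y m : EuclideanSpace ℝ (Fin 2))
            + (a m : ℝ) • rotE t (y m)
          = Sy + (a m : ℝ) • ((rotS t (y m) : EuclideanSpace ℝ (Fin 2)))
            - (a m : ℝ) • (y m : EuclideanSpace ℝ (Fin 2)) := by
        rw [rotS]; abel
      rw [heq]
      exact hmem
    have := sub_eq_zero.mp hc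
    exact this
  have hx0 : ∀ l, dist (x l) (x l) ≤ ε / 2 := by intro l; simp; positivity
  have hSj := force x j hj0 hx0
  have hSk := force x k hk0 hx0
  set S := ∑ l, (a l : ℝ) • (x l : EuclideanSpace ℝ (Fin 2)) with hSdef
  have hS1 : ‖S‖ = 1 := hball' (Metric.mem_ball_self hε)
  -- now perturb coordinate j by t0 and force at k
  set t0 : ℝ := δ / 2 with ht0def
  have ht0pos : 0 < t0 := by positivity
  have ht0δ : |t0| < δ := by rw [abs_of_pos ht0pos]; linarith
  set w := Function.update x j (rotS t0 (x j)) with hwdef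
  have hw : ∀ l, dist (w l) (x l) ≤ ε / 2 := by
    intro l
    rcases eq_or_ne l j with rfl | hlj
    · rw [hwdef, Function.update_self]
      calc dist (rotS t0 (x l)) (x l) ≤ 3 / 2 * |t0| := dist_rotS t0 (by rw [abs_of_pos ht0pos]; linarith) _
        _ ≤ ε / 2 := by
            rw [abs_of_pos ht0pos]
            have : t0 ≤ ε / 6 := by rw [ht0def]; linarith
            linarith
    · rw [hwdef, Function.update_of_ne hlj]
      simp; positivity
  have hforce2 := force w k hk0 hw
  have hwk : w k = x k := Function.update_of_ne (Ne.symm hjk) _ _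
  have hSw : (∑ l, (a l : ℝ) • (w l : EuclideanSpace ℝ (Fin 2))) = rotE t0 S := by
    rw [hwdef, sum_update_coe, ← hSdef, ← hSj]
    have : (rotS t0 (x j) : EuclideanSpace ℝ (Fin 2)) = rotE t0 (x j) := rfl
    rw [this, hSj, ← LinearIsometryEquiv.map_smul, ← hSj]
    abel
  rw [hSw, hwk, ← hSk] at hforce2
  -- hforce2 : rotE t0 S = S ; derive contradiction
  have hinner : ⟪S, rotE t0 S⟫ = ⟪S, S⟫ := by rw [hforce2]
  rw [inner_rotE] at hinner
  have hJS : ⟪S, oEE.rightAngleRotation S⟫ = 0 := by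
    rw [real_inner_comm]
    exact oEE.inner_rightAngleRotation_self S
  have hSS : ⟪S, S⟫ = 1 := by
    rw [real_inner_self_eq_norm_sq, hS1]; norm_num
  rw [hJS, hSS] at hinner
  have hcos1 : Real.cos t0 = 1 := by linarith
  have hπ := Real.pi_gt_three
  have ht01 : t0 ≤ 1 / 2 := by rw [ht0def]; linarith
  have := (Real.cos_eq_one_iff_of_lt_of_lt (x := t0) (by linarith) (by linarith)).mp hcos1
  linarith
end

section
/- The set of good direction sets is a dense G_δ subset of the configuration space F(E,d) of d-tuples of distinct unit vectors with principal arguments in [0,π). -/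
/-- The set `E` of unit complex numbers with principal argument in `[0, π)`. -/
def Edir : Type := {z : ℂ // ‖z‖ = 1 ∧ z.arg ∈ Set.Ico 0 Real.pi}

noncomputable instance : TopologicalSpace Edir := instTopologicalSpaceSubtype

/-- The configuration space `F(E,d)` of `d`-tuples of distinct directions in `E`. -/
def ConfSpace (d : ℕ) : Type := {u : Fin d → Edir // Function.Injective u}

noncomputable instance (d : ℕ) : TopologicalSpace (ConfSpace d) := instTopologicalSpaceSubtype

/-- The set of good direction sets inside the configuration space. -/
def GoodSet (d : ℕ) : Set (ConfSpace d) :=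
  {u | ∀ a : Fin d → ℤ,
    ‖∑ j, (a j : ℂ) * (u.val j).val‖ = 1 → ∃! j, a j ≠ 0}

open Complex Set

/-! ### Auxiliary analytic lemmas -/

lemma key_re (z : ℂ) {α β : ℝ} (hαβ : α < β) (c : ℝ)
    (H : ∀ θ ∈ Set.Ioo α β, (z * Complex.exp ((θ:ℂ) * Complex.I)).re = c) : z = 0 := by
  have hπ := Real.pi_pos
  set δ : ℝ := min (β - α) Real.pi / 4 with hδdef
  have hδ0 : 0 < δ := by
    have : 0 < min (β - α) Real.pi := lt_min (by linarith) hπ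
    positivity
  have hδle : δ ≤ (β - α) / 4 := by
    have := min_le_left (β - α) Real.pi
    simp only [hδdef]; linarith
  have hδπ : δ < Real.pi := by
    have := min_le_right (β - α) Real.pi
    simp only [hδdef]; linarith
  have expand : ∀ θ : ℝ, (z * Complex.exp ((θ:ℂ) * Complex.I)).re
      = z.re * Real.cos θ - z.im * Real.sin θ := by
    intro θ
    rw [Complex.exp_mul_I]
    simp [Complex.mul_re, Complex.add_re, Complex.add_im, Complex.cos_ofReal_re,
      Complex.sin_ofReal_re, Complex.cos_ofReal_im, Complex.sin_ofReal_im, Complex.mul_im]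
  set x := z.re
  set y := z.im
  have mem : ∀ k : ℝ, 0 < k → k ≤ 3 → α + k * δ ∈ Set.Ioo α β := by
    intro k hk0 hk3
    constructor
    · nlinarith
    · nlinarith
  have E1 := H _ (mem 1 one_pos (by norm_num))
  have E2 := H _ (mem 2 (by norm_num) (by norm_num))
  have E3 := H _ (mem 3 (by norm_num) (by norm_num))
  rw [expand] at E1 E2 E3
  have e2 : α + 2 * δ = (α + 1 * δ) + δ := by ring
  have e3 : α + 3 * δ = ((α + 1 * δ) + δ) + δ := by ring
  rw [e2, Real.cos_add (α + 1*δ) δ, Real.sin_add (α + 1*δ) δ] at E2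
  rw [e3, Real.cos_add ((α + 1*δ) + δ) δ, Real.sin_add ((α + 1*δ) + δ) δ,
    Real.cos_add (α + 1*δ) δ, Real.sin_add (α + 1*δ) δ] at E3
  set c₀ := Real.cos (α + 1 * δ)
  set s₀ := Real.sin (α + 1 * δ)
  set cd := Real.cos δ
  set sd := Real.sin δ
  have pyth1 : s₀ ^ 2 + c₀ ^ 2 = 1 := Real.sin_sq_add_cos_sq _
  have pyth2 : sd ^ 2 + cd ^ 2 = 1 := Real.sin_sq_add_cos_sq _
  have hsd : 0 < sd := Real.sin_pos_of_pos_of_lt_pi hδ0 hδπ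
  have hcd : cd < 1 := by nlinarith [hsd, pyth2]
  have hu : sd * (x * s₀ + y * c₀) = (cd - 1) * c := by linear_combination cd * E1 - E2
  have h2 : 2 * c * (cd - 1) = 0 := by
    linear_combination E3 - (cd^2 - sd^2) * E1 + 2*cd*hu + c*pyth2
  have hc : c = 0 := by
    rcases mul_eq_zero.mp h2 with h | h
    · linarith [mul_eq_zero.mp h]
    · linarith
  have hu0 : x * s₀ + y * c₀ = 0 := by
    have h1 : sd * (x * s₀ + y * c₀) = 0 := by rw [hu, hc]; ring
    rcases mul_eq_zero.mp h1 with h | h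
    · exact absurd h (ne_of_gt hsd)
    · exact h
  have hE1' : x * c₀ - y * s₀ = 0 := by rw [hc] at E1; linarith
  have hx : x = 0 := by linear_combination s₀ * hu0 + c₀ * hE1' - x * pyth1
  have hy : y = 0 := by linear_combination c₀ * hu0 - s₀ * hE1' - y * pyth1
  exact Complex.ext hx hy

lemma const_on_interval {t : ℝ} (ht : t ≠ 0) {w : ℂ} {α β : ℝ} (hαβ : α < β)
    (H : ∀ θ ∈ Set.Ioo α β, Complex.normSq ((t:ℂ) * Complex.exp ((θ:ℂ) * Complex.I) + w) = 1) :
    w = 0 := by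
  have h2t : (2:ℝ) * t ≠ 0 := mul_ne_zero two_ne_zero ht
  have key : ∀ θ ∈ Set.Ioo α β,
      ((starRingEnd ℂ) w * Complex.exp ((θ:ℂ) * Complex.I)).re
        = (1 - t^2 - Complex.normSq w) / (2 * t) := by
    intro θ hθ
    have h := H θ hθ
    rw [Complex.normSq_add, Complex.normSq_mul] at h
    have habs : Complex.normSq (Complex.exp ((θ:ℂ) * Complex.I)) = 1 := by
      rw [Complex.normSq_eq_norm_sq, Complex.norm_exp_ofReal_mul_I]; norm_num
    rw [habs, Complex.normSq_ofReal] at h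
    have hre : ((t:ℂ) * Complex.exp ((θ:ℂ) * Complex.I) * (starRingEnd ℂ) w).re
        = t * ((starRingEnd ℂ) w * Complex.exp ((θ:ℂ) * Complex.I)).re := by
      rw [mul_assoc, mul_comm (Complex.exp ((θ:ℂ) * Complex.I)) _, Complex.re_ofReal_mul]
    rw [hre] at h
    rw [eq_div_iff h2t]
    linear_combination h
  have := key_re ((starRingEnd ℂ) w) hαβ _ key
  simpa using this

/-! ### Basic facts about `Edir` -/

lemma edir_exp_arg (z : Edir) : Complex.exp ((z.val.arg : ℂ) * Complex.I) = z.val := by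
  have := Complex.norm_mul_exp_arg_mul_I z.val
  rwa [z.prop.1, Complex.ofReal_one, one_mul] at this

lemma edir_ne_neg (z w : Edir) : z.val ≠ -w.val := by
  intro h
  have hz := z.prop; have hw := w.prop
  have hzim : 0 ≤ z.val.im := Complex.arg_nonneg_iff.mp hz.2.1
  have hwim : 0 ≤ w.val.im := Complex.arg_nonneg_iff.mp hw.2.1
  have him : z.val.im = -w.val.im := by rw [h]; simp
  have hz0 : z.val.im = 0 := le_antisymm (by linarith) hzim
  have hw0 : w.val.im = 0 := by linarith [him, hz0]
  have hre2 : ∀ u : Edir, u.val.im = 0 → u.val.re = 1 := by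
    intro u hu0
    have habs := u.prop.1
    have h1 : (u.val.re - 1) * (u.val.re + 1) = 0 := by
      have := Complex.sq_norm u.val
      rw [habs] at this
      rw [Complex.normSq_apply, hu0] at this
      nlinarith
    rcases mul_eq_zero.mp h1 with h' | h'
    · linarith
    · exfalso
      have hpi : u.val.arg = Real.pi := Complex.arg_eq_pi_iff.mpr ⟨by nlinarith, hu0⟩
      have := u.prop.2.2
      rw [hpi] at this
      exact lt_irrefl _ this
  have hz1 := hre2 z hz0
  have hw1 := hre2 w hw0
  have : z.val.re = -w.val.re := by rw [h]; simp
  rw [hz1, hw1] at this; norm_num at this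

lemma edir_mul_ne (z w : Edir) (hzw : z ≠ w) (b c : ℤ) (hb : b ≠ 0) :
    (b : ℂ) * z.val ≠ (c : ℂ) * w.val := by
  intro h
  have hbC : (b:ℂ) ≠ 0 := Int.cast_ne_zero.mpr hb
  have habs : ‖(b:ℂ) * z.val‖ = ‖(c:ℂ) * w.val‖ := by rw [h]
  rw [norm_mul, norm_mul, z.prop.1, w.prop.1, Complex.norm_intCast, Complex.norm_intCast] at habs
  simp only [mul_one] at habs
  have hbc : b = c ∨ b = -c := by
    have : |b| = |c| := by exact_mod_cast habs
    exact abs_eq_abs.mp this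
  rcases hbc with rfl | rfl
  · exact hzw (Subtype.ext (mul_left_cancel₀ hbC h))
  · have hcne : (c : ℂ) ≠ 0 := by
      intro h0
      apply hb; simp only [neg_eq_zero]; exact_mod_cast h0
    have h' : (c:ℂ) * (-z.val) = (c:ℂ) * w.val := by push_cast at h ⊢; linear_combination h
    have h'' := mul_left_cancel₀ hcne h'
    exact edir_ne_neg z w (by rw [← h'']; simp)

/-! ### Topological structure -/

/-- `E` as a subset of `ℂ`. -/
def Eset : Set ℂ := {z | ‖z‖ = 1 ∧ z.arg ∈ Set.Ico 0 Real.pi}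

lemma isLocallyClosed_Eset : IsLocallyClosed Eset := by
  refine ⟨{z | z ≠ -1}, {z | ‖z‖ = 1 ∧ 0 ≤ z.im}, isOpen_ne, ?_, ?_⟩
  · exact (isClosed_eq continuous_norm continuous_const).inter
      (isClosed_le continuous_const Complex.continuous_im)
  · ext z
    simp only [Eset, mem_setOf_eq, mem_inter_iff, Set.mem_Ico]
    constructor
    · rintro ⟨habs, harg0, hargpi⟩
      refine ⟨?_, habs, Complex.arg_nonneg_iff.mp harg0⟩
      intro h
      rw [h] at hargpi
      simp [Complex.arg_neg_one] at hargpi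
    · rintro ⟨hne, habs, him⟩
      refine ⟨habs, Complex.arg_nonneg_iff.mpr him, ?_⟩
      rcases lt_or_eq_of_le (Complex.arg_le_pi z) with h | h
      · exact h
      · exfalso
        obtain ⟨hre, him0⟩ := Complex.arg_eq_pi_iff.mp h
        apply hne
        have : ‖z‖ = |z.re| := by
          rw [Complex.norm_def, Complex.normSq_apply, him0]
          rw [show z.re * z.re + 0 * 0 = z.re ^ 2 by ring, Real.sqrt_sq_eq_abs]
        rw [this] at habs
        have : z.re = -1 := by
          rcases abs_eq (by norm_num : (0:ℝ) ≤ 1) |>.mp habs with h' | h'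
          · linarith
          · exact h'
        exact Complex.ext (by simpa using this) (by simpa using him0)

instance : LocallyCompactSpace Edir := isLocallyClosed_Eset.locallyCompactSpace

instance : T2Space Edir := by unfold Edir; infer_instance

instance (d : ℕ) : T2Space (ConfSpace d) := by unfold ConfSpace; infer_instance

/-- The configuration space as a subset of `(Fin d → Edir)`. -/
def InjSet (d : ℕ) : Set (Fin d → Edir) := {u | Function.Injective u}

lemma isOpen_injSet (d : ℕ) : IsOpen (InjSet d) := by
  have : (InjSet d)ᶜ = ⋃ i, ⋃ j, {u : Fin d → Edir | i ≠ j ∧ u i = u j} := by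
    ext u
    simp only [InjSet, mem_compl_iff, mem_setOf_eq, mem_iUnion, Function.Injective]
    constructor
    · intro h
      push_neg at h
      obtain ⟨i, j, hij, hne⟩ := h
      exact ⟨i, j, hne, hij⟩
    · rintro ⟨i, j, hne, hij⟩ h
      exact hne (h hij)
  rw [← isClosed_compl_iff, this]
  refine isClosed_iUnion_of_finite fun i => isClosed_iUnion_of_finite fun j => ?_
  by_cases h : i = j
  · have : {u : Fin d → Edir | i ≠ j ∧ u i = u j} = ∅ := by
      ext u; simp [h]
    rw [this]; exact isClosed_empty
  · have : {u : Fin d → Edir | i ≠ j ∧ u i = u j} = {u | u i = u j} := by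
      ext u; simp [h]
    rw [this]
    exact isClosed_eq (continuous_apply i) (continuous_apply j)

instance (d : ℕ) : LocallyCompactSpace (ConfSpace d) :=
  (isOpen_injSet d).isLocallyClosed.locallyCompactSpace

/-! ### Density of the complement of each "bad" condition -/

lemma dense_ne_one (d : ℕ) (a : Fin d → ℤ) (p q : Fin d) (hpq : p ≠ q)
    (hp : a p ≠ 0) (hq : a q ≠ 0) :
    Dense {u : ConfSpace d | ‖∑ j, (a j : ℂ) * (u.val j).val‖ ≠ 1} := by
  rw [dense_iff_inter_open]
  rintro U hU ⟨u, hu⟩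
  set S : ℂ := ∑ j, (a j : ℂ) * ((u.val j).val) with hSdef
  obtain ⟨r, har, hwr⟩ : ∃ r, a r ≠ 0 ∧ S - (a r : ℂ) * (u.val r).val ≠ 0 := by
    by_contra hcon
    push_neg at hcon
    have h1 := hcon p hp
    have h2 := hcon q hq
    have heq : (a p : ℂ) * (u.val p).val = (a q : ℂ) * (u.val q).val := by
      have e1 := sub_eq_zero.mp h1
      have e2 := sub_eq_zero.mp h2
      rw [← e1, ← e2]
    exact edir_mul_ne (u.val p) (u.val q)
      (fun h => hpq (u.prop h)) _ _ hp heq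
  set w : ℂ := S - (a r : ℂ) * (u.val r).val with hwdef
  set θr : ℝ := ((u.val r).val).arg with hθrdef
  have hθr0 : 0 ≤ θr := (u.val r).prop.2.1
  have hθrπ : θr < Real.pi := (u.val r).prop.2.2
  set qb : ℝ := (θr + Real.pi) / 2 with hqbdef
  have hqbπ : qb < Real.pi := by rw [hqbdef]; linarith
  have hθqb : θr < qb := by rw [hqbdef]; linarith
  have hqb0 : 0 ≤ qb := by rw [hqbdef]; positivity
  have memE : ∀ θ : ℝ, ‖Complex.exp ((min (max θ 0) qb : ℝ) * Complex.I)‖ = 1 ∧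
      (Complex.exp ((min (max θ 0) qb : ℝ) * Complex.I)).arg ∈ Set.Ico 0 Real.pi := by
    intro θ
    set cθ := min (max θ 0) qb with hcθ
    have h0 : 0 ≤ cθ := le_min (le_max_right θ 0) hqb0
    have hπ : cθ < Real.pi := lt_of_le_of_lt (min_le_right _ _) hqbπ
    refine ⟨Complex.norm_exp_ofReal_mul_I _, ?_⟩
    rw [Complex.exp_mul_I, Complex.arg_cos_add_sin_mul_I ⟨by linarith [Real.pi_pos], by linarith⟩]
    exact ⟨h0, hπ⟩
  let E : ℝ → Edir := fun θ => ⟨Complex.exp ((min (max θ 0) qb : ℝ) * Complex.I), memE θ⟩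
  have hEcont : Continuous E := by
    apply Continuous.subtype_mk
    exact Complex.continuous_exp.comp
      ((Complex.continuous_ofReal.comp
        ((continuous_id.max continuous_const).min continuous_const)).mul continuous_const)
  set γ : ℝ → (Fin d → Edir) := fun θ j => if j = r then E θ else u.val j with hγdef
  have hγcont : Continuous γ := by
    apply continuous_pi
    intro j
    by_cases h : j = r
    · simpa [hγdef, h] using hEcont
    · simp only [hγdef, h, if_false]
      exact continuous_const
  obtain ⟨W, hW, hWU⟩ := (Topology.IsInducing.subtypeVal (t := InjSet d)).isOpen_iff.mp hU
  have hγθr : γ θr = u.val := by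
    funext j
    by_cases h : j = r
    · apply Subtype.ext
      simp only [hγdef, h]
      simp only [if_true, ite_true]
      show Complex.exp ((min (max θr 0) qb : ℝ) * Complex.I) = (u.val r).val
      rw [max_eq_left hθr0, min_eq_left (le_of_lt hθqb)]
      exact edir_exp_arg (u.val r)
    · simp [hγdef, h]
  have huW : u.val ∈ W := by
    rw [← hWU] at hu
    exact hu
  have hopen : IsOpen (γ ⁻¹' (W ∩ InjSet d)) := ((hW.inter (isOpen_injSet d)).preimage hγcont)
  have hmem : θr ∈ γ ⁻¹' (W ∩ InjSet d) := by
    rw [Set.mem_preimage, hγθr]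
    exact ⟨huW, u.prop⟩
  obtain ⟨δ, hδ0, hball⟩ := Metric.isOpen_iff.mp hopen θr hmem
  set b : ℝ := min (θr + δ) qb with hbdef
  have hb : θr < b := lt_min (by linarith) hθqb
  have hnot : ¬ ∀ θ ∈ Set.Ioo θr b,
      Complex.normSq (((a r : ℝ) : ℂ) * Complex.exp ((θ:ℂ) * Complex.I) + w) = 1 := by
    intro hall
    exact hwr (const_on_interval (by exact_mod_cast har) hb hall)
  push_neg at hnot
  obtain ⟨θ, hθmem, hθne⟩ := hnot
  obtain ⟨hθl, hθu⟩ := hθmem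
  have hθ0 : 0 ≤ θ := le_trans hθr0 (le_of_lt hθl)
  have hθqb' : θ ≤ qb := le_of_lt (lt_of_lt_of_le hθu (min_le_right _ _))
  have hθclamp : min (max θ 0) qb = θ := by
    rw [max_eq_left hθ0, min_eq_left hθqb']
  have hθball : θ ∈ Metric.ball θr δ := by
    rw [Metric.mem_ball, Real.dist_eq, abs_of_pos (by linarith)]
    have : b ≤ θr + δ := min_le_left _ _
    linarith
  have hγθ := hball hθball
  have hinj : Function.Injective (γ θ) := hγθ.2
  refine ⟨⟨γ θ, hinj⟩, ?_, ?_⟩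
  · rw [← hWU]
    exact hγθ.1
  · show ‖∑ j, (a j : ℂ) * ((γ θ) j).val‖ ≠ 1
    have hsum : ∑ j, (a j : ℂ) * ((γ θ) j).val
        = ((a r : ℝ) : ℂ) * Complex.exp ((θ:ℂ) * Complex.I) + w := by
      rw [show (Finset.univ : Finset (Fin d)) = insert r (Finset.univ.erase r) from
        (Finset.insert_erase (Finset.mem_univ r)).symm,
        Finset.sum_insert (Finset.notMem_erase r _)]
      have h1 : (a r : ℂ) * ((γ θ) r).val
          = ((a r : ℝ) : ℂ) * Complex.exp ((θ:ℂ) * Complex.I) := by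
        simp only [hγdef]
        simp only [if_true, ite_true]
        show (a r : ℂ) * Complex.exp ((min (max θ 0) qb : ℝ) * Complex.I) = _
        rw [hθclamp]
        push_cast
        ring
      have h2 : ∑ j ∈ Finset.univ.erase r, (a j : ℂ) * ((γ θ) j).val
          = ∑ j ∈ Finset.univ.erase r, (a j : ℂ) * ((u.val j)).val := by
        apply Finset.sum_congr rfl
        intro j hj
        have : j ≠ r := Finset.ne_of_mem_erase hj
        simp [hγdef, this]
      rw [h1, h2, Finset.sum_erase_eq_sub (Finset.mem_univ r)]
    rw [hsum]
    intro habs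
    apply hθne
    rw [Complex.normSq_eq_norm_sq, habs]
    norm_num

/-! ### The pieces of the countable intersection -/

/-- The condition corresponding to a single integer vector `a`. -/
def Tset (d : ℕ) (a : Fin d → ℤ) : Set (ConfSpace d) :=
  {u | ‖∑ j, (a j : ℂ) * (u.val j).val‖ = 1 → ∃! j, a j ≠ 0}

lemma goodSet_eq_iInter (d : ℕ) : GoodSet d = ⋂ a : Fin d → ℤ, Tset d a := by
  ext u
  simp only [GoodSet, Tset, mem_setOf_eq, Set.mem_iInter]

lemma continuous_absSum (d : ℕ) (a : Fin d → ℤ) :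
    Continuous fun u : ConfSpace d => ‖∑ j, (a j : ℂ) * ((u.val j).val)‖ := by
  apply continuous_norm.comp
  apply continuous_finset_sum
  intro j _
  exact continuous_const.mul
    (continuous_subtype_val.comp ((continuous_apply j).comp continuous_subtype_val))

lemma isOpen_Tset (d : ℕ) (a : Fin d → ℤ) : IsOpen (Tset d a) := by
  by_cases h : ∃! j, a j ≠ 0
  · have : Tset d a = univ := eq_univ_of_forall fun u _ => h
    rw [this]; exact isOpen_univ
  · have heq : Tset d a = {u : ConfSpace d |
        ‖∑ j, (a j : ℂ) * (u.val j).val‖ = 1}ᶜ := by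
      ext u
      constructor
      · intro hu hab
        exact h (hu hab)
      · intro hne hab
        exact absurd hab hne
    rw [heq]
    exact (isClosed_eq (continuous_absSum d a) continuous_const).isOpen_compl

lemma dense_Tset (d : ℕ) (a : Fin d → ℤ) : Dense (Tset d a) := by
  by_cases h : ∃! j, a j ≠ 0
  · have : Tset d a = univ := eq_univ_of_forall fun u _ => h
    rw [this]; exact dense_univ
  by_cases h0 : a = 0
  · have : Tset d a = univ := eq_univ_of_forall fun u hab => by
      subst h0
      simp at hab
    rw [this]; exact dense_univ
  · obtain ⟨p, hp⟩ := Function.ne_iff.mp h0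
    have hp' : a p ≠ 0 := hp
    have hq : ∃ q, a q ≠ 0 ∧ q ≠ p := by
      by_contra hc
      push_neg at hc
      exact h ⟨p, hp', hc⟩
    obtain ⟨q, hq', hqp⟩ := hq
    refine Dense.mono ?_ (dense_ne_one d a p q (Ne.symm hqp) hp' hq')
    intro u hu hab
    exact absurd hab hu

theorem goodSet_dense_Gdelta (d : ℕ) :
    Dense (GoodSet d) ∧ IsGδ (GoodSet d) := by
  rw [goodSet_eq_iInter]
  constructor
  · exact dense_iInter_of_isOpen (isOpen_Tset d) (dense_Tset d)
  · exact IsGδ.iInter_of_isOpen (isOpen_Tset d)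
end
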